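/- arXiv:1103.0176 — 7 statements merged into one kernel-verified Lean document; each statement's English description precedes it below -/
import Mathlib

section
/- Let r ∈ (0, 1), b > 0 with b + r = 1, h ≥ 0, c > 0, and let (φ, ψ) be a monotone wavefront profile of the Belousov–Zhabotinsky system with parameters (r, b, h, c). Then φ(t − c·h) ≤ ψ(t) ≤ φ(t) for all t ∈ ℝ; in particular, if h = 0 then φ(t) = ψ(t) for all t ∈ ℝ. -/
open Real Filter Asymptotics

/-- A monotone wavefront profile of the (delayed) Belousov–Zhabotinsky system
with parameters `(r, b, h, c)`. -/
structure IsBZWavefront (r b h c : ℝ) (φ ψ : ℝ → ℝ) : Prop where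
  phi_smooth : ContDiff ℝ 2 φ
  psi_smooth : ContDiff ℝ 2 ψ
  eq_phi : ∀ t : ℝ,
    deriv (deriv φ) t - c * deriv φ t + φ t * (1 - r - φ t + r * ψ t) = 0
  eq_psi : ∀ t : ℝ,
    deriv (deriv ψ) t - c * deriv ψ t + b * φ (t - c * h) * (1 - ψ t) = 0
  phi_pos : ∀ t : ℝ, 0 < φ t
  phi_lt_one : ∀ t : ℝ, φ t < 1
  psi_pos : ∀ t : ℝ, 0 < ψ t
  psi_lt_one : ∀ t : ℝ, ψ t < 1
  dphi_pos : ∀ t : ℝ, 0 < deriv φ t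
  dpsi_pos : ∀ t : ℝ, 0 < deriv ψ t
  phi_bot : Tendsto φ atBot (nhds 0)
  psi_bot : Tendsto ψ atBot (nhds 0)
  phi_top : Tendsto φ atTop (nhds 1)
  psi_top : Tendsto ψ atTop (nhds 1)

/-- From `C²` extract differentiability of the function and of its derivative. -/
lemma bz_aux_diff {f : ℝ → ℝ} (hf : ContDiff ℝ 2 f) :
    Differentiable ℝ f ∧ Differentiable ℝ (deriv f) := by
  have h2 : ContDiff ℝ ((1 : WithTop ℕ∞) + 1) f := by
    convert hf using 2
    exact one_add_one_eq_two
  obtain ⟨hd, -, h1⟩ := contDiff_succ_iff_deriv.mp h2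
  exact ⟨hd, h1.differentiable one_ne_zero⟩

/-- A maximum principle: a `C²` function on `ℝ` vanishing at `±∞`, whose second
derivative is positive at any global maximum point with positive value and vanishing
first derivative, is nonpositive. -/
lemma bz_max_principle (w : ℝ → ℝ)
    (hdw : Differentiable ℝ w) (hdw2 : Differentiable ℝ (deriv w))
    (hbot : Tendsto w atBot (nhds 0)) (htop : Tendsto w atTop (nhds 0))
    (key : ∀ t, 0 < w t → (∀ s, w s ≤ w t) → deriv w t = 0 →
      0 < deriv (deriv w) t) :
    ∀ t, w t ≤ 0 := by
  by_contra hcon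
  push_neg at hcon
  obtain ⟨a, ha⟩ := hcon
  obtain ⟨M, hM⟩ := (htop.eventually_lt_const ha).exists_forall_of_atTop
  obtain ⟨m, hm⟩ := (hbot.eventually_lt_const ha).exists_forall_of_atBot
  set l := min m a with hl
  set u := max M a with hu
  have hlu : l ≤ u := le_trans (min_le_right _ _) (le_max_right _ _)
  have haK : a ∈ Set.Icc l u := ⟨min_le_right _ _, le_max_right _ _⟩
  obtain ⟨t₀, ht₀K, ht₀max⟩ := isCompact_Icc.exists_isMaxOn ⟨a, haK⟩
    hdw.continuous.continuousOn
  have hwa : w a ≤ w t₀ := ht₀max haK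
  have hglob : ∀ s, w s ≤ w t₀ := by
    intro s
    by_cases hs : s ∈ Set.Icc l u
    · exact ht₀max hs
    · rcases not_and_or.mp hs with h' | h'
      · push_neg at h'
        exact le_trans (hm s (le_trans h'.le (min_le_left _ _))).le hwa
      · push_neg at h'
        exact le_trans (hM s (le_trans (le_max_left _ _) h'.le)).le hwa
  have hpos : 0 < w t₀ := lt_of_lt_of_le ha hwa
  have hlocmax : IsLocalMax w t₀ := Filter.Eventually.of_forall hglob
  have hd0 : deriv w t₀ = 0 := hlocmax.deriv_eq_zero
  have hL : 0 < deriv (deriv w) t₀ := key t₀ hpos hglob hd0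
  -- derivative of `deriv w` positive at `t₀`: `deriv w` positive just to the right
  have hslope : Tendsto (slope (deriv w) t₀) (nhdsWithin t₀ {t₀}ᶜ)
      (nhds (deriv (deriv w) t₀)) :=
    hasDerivAt_iff_tendsto_slope.mp (hdw2 t₀).hasDerivAt
  have hslope' : Tendsto (slope (deriv w) t₀) (nhdsWithin t₀ (Set.Ioi t₀))
      (nhds (deriv (deriv w) t₀)) :=
    hslope.mono_left (nhdsWithin_mono _ (fun x hx => ne_of_gt hx))
  have hev : ∀ᶠ x in nhdsWithin t₀ (Set.Ioi t₀), 0 < deriv w x := by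
    filter_upwards [hslope'.eventually_const_lt hL, self_mem_nhdsWithin] with x hx hx'
    have hxt : 0 < x - t₀ := sub_pos.mpr hx'
    have : 0 < (deriv w x - deriv w t₀) / (x - t₀) := by
      simpa [slope_def_field, div_eq_inv_mul] using hx
    have := mul_pos this hxt
    rw [div_mul_cancel₀ _ (ne_of_gt hxt)] at this
    linarith [hd0]
  rw [eventually_nhdsWithin_iff] at hev
  obtain ⟨ε, hε, hball⟩ := Metric.eventually_nhds_iff.mp hev
  -- `w` is strictly increasing on `[t₀, t₀ + ε/2]`, contradicting the maximum
  have hmono : StrictMonoOn w (Set.Icc t₀ (t₀ + ε / 2)) := by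
    apply strictMonoOn_of_deriv_pos (convex_Icc _ _) hdw.continuous.continuousOn
    intro x hx
    rw [interior_Icc] at hx
    apply hball
    · rw [Real.dist_eq, abs_of_pos (sub_pos.mpr hx.1)]
      linarith [hx.2]
    · exact hx.1
  have h1 : w t₀ < w (t₀ + ε / 2) :=
    hmono ⟨le_rfl, by linarith⟩ ⟨by linarith, le_rfl⟩ (by linarith)
  exact absurd (hglob (t₀ + ε / 2)) (not_le.mpr h1)

theorem bz_component_comparison_critical_sum
    (r b h c : ℝ) (hr0 : 0 < r) (hr1 : r < 1) (hb : 0 < b) (hbr : b + r = 1)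
    (hh : 0 ≤ h) (hc : 0 < c)
    (φ ψ : ℝ → ℝ) (hw : IsBZWavefront r b h c φ ψ) :
    (∀ t : ℝ, φ (t - c * h) ≤ ψ t ∧ ψ t ≤ φ t) ∧
      (h = 0 → ∀ t : ℝ, φ t = ψ t) := by
  obtain ⟨hφd, hφd2⟩ := bz_aux_diff hw.phi_smooth
  obtain ⟨hψd, hψd2⟩ := bz_aux_diff hw.psi_smooth
  have hφmono : StrictMono φ := strictMono_of_deriv_pos hw.dphi_pos
  have hψmono : StrictMono ψ := strictMono_of_deriv_pos hw.dpsi_pos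
  have hch : 0 ≤ c * h := mul_nonneg hc.le hh
  -- first part : ψ ≤ φ
  have part1 : ∀ t, ψ t - φ t ≤ 0 := by
    set w : ℝ → ℝ := fun t => ψ t - φ t with hwdef
    have hwdiff : Differentiable ℝ w := hψd.sub hφd
    have hwd : deriv w = fun t => deriv ψ t - deriv φ t :=
      funext fun t => deriv_sub (hψd t) (hφd t)
    have hwd2 : ∀ t, deriv (deriv w) t = deriv (deriv ψ) t - deriv (deriv φ) t := by
      intro t
      rw [hwd]
      exact deriv_sub (hψd2 t) (hφd2 t)
    have hwdiff2 : Differentiable ℝ (deriv w) := by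
      rw [hwd]; exact hψd2.sub hφd2
    have hbot : Tendsto w atBot (nhds 0) := by
      simpa using hw.psi_bot.sub hw.phi_bot
    have htop : Tendsto w atTop (nhds 0) := by
      simpa using hw.psi_top.sub hw.phi_top
    apply bz_max_principle w hwdiff hwdiff2 hbot htop
    intro t hpos _ hd0
    rw [hwd2 t]
    have E1 := hw.eq_phi t
    have E2 := hw.eq_psi t
    have hdd : deriv ψ t = deriv φ t := by
      have := hd0
      rw [hwd] at this
      simpa using sub_eq_zero.mp this
    have hφs : φ (t - c * h) ≤ φ t := hφmono.monotone (by linarith)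
    have hψ1 : ψ t < 1 := hw.psi_lt_one t
    have hφpos : 0 < φ t := hw.phi_pos t
    have hlt : φ t < ψ t := by simpa [hwdef, sub_pos] using hpos
    have hbr' : b = 1 - r := by linarith
    subst hbr'
    nlinarith [mul_nonneg (mul_nonneg hb.le (sub_nonneg.mpr hψ1.le))
        (sub_nonneg.mpr hφs), mul_pos hφpos (sub_pos.mpr hlt)]
  -- second part : φ (· - c h) ≤ ψ
  have part2 : ∀ t, φ (t - c * h) - ψ t ≤ 0 := by
    set w : ℝ → ℝ := fun t => φ (t - c * h) - ψ t with hwdef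
    have hshift : Differentiable ℝ (fun t : ℝ => φ (t - c * h)) :=
      hφd.comp (differentiable_id.sub_const _)
    have hwdiff : Differentiable ℝ w := hshift.sub hψd
    have hds : deriv (fun t : ℝ => φ (t - c * h)) = fun t => deriv φ (t - c * h) :=
      funext fun t => deriv_comp_sub_const φ (c * h) t
    have hwd : deriv w = fun t => deriv φ (t - c * h) - deriv ψ t := by
      funext t
      rw [show w = fun t => (fun s => φ (s - c * h)) t - ψ t from rfl,
        deriv_fun_sub (hshift t) (hψd t), hds]
    have hwd2 : ∀ t, deriv (deriv w) t
        = deriv (deriv φ) (t - c * h) - deriv (deriv ψ) t := by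
      intro t
      rw [hwd]
      have hshift2 : Differentiable ℝ (fun t : ℝ => deriv φ (t - c * h)) :=
        hφd2.comp (differentiable_id.sub_const _)
      rw [deriv_fun_sub (hshift2 t) (hψd2 t), deriv_comp_sub_const]
    have hwdiff2 : Differentiable ℝ (deriv w) := by
      rw [hwd]
      exact (hφd2.comp (differentiable_id.sub_const _)).sub hψd2
    have hsubbot : Tendsto (fun t : ℝ => t - c * h) atBot atBot :=
      tendsto_atBot_add_const_right _ _ tendsto_id
    have hsubtop : Tendsto (fun t : ℝ => t - c * h) atTop atTop :=
      tendsto_atTop_add_const_right _ _ tendsto_id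
    have hbot : Tendsto w atBot (nhds 0) := by
      simpa using (hw.phi_bot.comp hsubbot).sub hw.psi_bot
    have htop : Tendsto w atTop (nhds 0) := by
      simpa using (hw.phi_top.comp hsubtop).sub hw.psi_top
    apply bz_max_principle w hwdiff hwdiff2 hbot htop
    intro t hpos _ hd0
    rw [hwd2 t]
    have E1 := hw.eq_phi (t - c * h)
    have E2 := hw.eq_psi t
    have hdd : deriv φ (t - c * h) = deriv ψ t := by
      have := hd0
      rw [hwd] at this
      simpa using sub_eq_zero.mp this
    have hψs : ψ (t - c * h) ≤ ψ t := hψmono.monotone (by linarith)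
    have hφpos : 0 < φ (t - c * h) := hw.phi_pos _
    have hlt : ψ t < φ (t - c * h) := by simpa [hwdef, sub_pos] using hpos
    have hbr' : b = 1 - r := by linarith
    subst hbr'
    nlinarith [mul_nonneg (mul_nonneg hr0.le (sub_nonneg.mpr hψs)) hφpos.le,
      mul_pos hφpos (sub_pos.mpr hlt)]
  refine ⟨fun t => ⟨by linarith [part2 t], by linarith [part1 t]⟩, ?_⟩
  intro h0 t
  have h1 := part1 t
  have h2 := part2 t
  rw [h0] at h2
  simp at h2
  linarith
end

section
/- Let r ≥ 1, b > 0, h ≥ 0, c > 0, and let (φ, ψ) be a monotone wavefront profile of the Belousov–Zhabotinsky system with parameters (r, b, h, c). Then ψ(t) > φ(t) for all t ∈ ℝ. -/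
open Real Filter Asymptotics

private lemma aux_deriv_contDiff {f : ℝ → ℝ} (hf : ContDiff ℝ 2 f) :
    ContDiff ℝ 1 (deriv f) := by
  have h2 : ContDiff ℝ (1 + 1) f := by
    convert hf using 2
    norm_num
  exact (contDiff_succ_iff_deriv.mp h2).2.2

/-- Second derivative test at a local maximum. -/
private lemma aux_deriv2_nonpos {f : ℝ → ℝ} {a : ℝ} (hf : ContDiff ℝ 2 f)
    (h : IsLocalMax f a) : deriv (deriv f) a ≤ 0 := by
  by_contra hK
  push_neg at hK
  have hfd : Differentiable ℝ f := hf.differentiable (by norm_num)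
  have hf1 : ContDiff ℝ 1 (deriv f) := aux_deriv_contDiff hf
  have hdd : DifferentiableAt ℝ (deriv f) a := (hf1.differentiable one_ne_zero) a
  have h0 : deriv f a = 0 := h.deriv_eq_zero
  have hslope : Tendsto (slope (deriv f) a) (nhdsWithin a {a}ᶜ)
      (nhds (deriv (deriv f) a)) :=
    hasDerivAt_iff_tendsto_slope.mp hdd.hasDerivAt
  have hslope' : Tendsto (slope (deriv f) a) (nhdsWithin a (Set.Ioi a))
      (nhds (deriv (deriv f) a)) :=
    hslope.mono_left (nhdsWithin_mono a (fun x hx => ne_of_gt hx))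
  have hpos : ∀ᶠ x in nhdsWithin a (Set.Ioi a), 0 < deriv f x := by
    filter_upwards [hslope'.eventually (eventually_gt_nhds hK),
      self_mem_nhdsWithin] with x hx hx'
    have hxa : 0 < x - a := sub_pos.mpr hx'
    have : 0 < (x - a)⁻¹ * (deriv f x - deriv f a) := by
      simpa [slope_def_field, div_eq_inv_mul] using hx
    rw [h0, sub_zero] at this
    nlinarith [inv_pos.mpr hxa]
  have hmax : ∀ᶠ x in nhdsWithin a (Set.Ioi a), f x ≤ f a :=
    h.filter_mono nhdsWithin_le_nhds
  obtain ⟨u, hu, hsub⟩ := mem_nhdsGT_iff_exists_Ioo_subset.mp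
    (hpos.and hmax)
  have hau : a < u := hu
  set m := (a + u) / 2 with hm
  have ham : a < m := by simp [hm]; linarith
  have hmu : m < u := by simp [hm]; linarith
  have hmono : StrictMonoOn f (Set.Icc a m) := by
    apply strictMonoOn_of_deriv_pos (convex_Icc a m) hfd.continuous.continuousOn
    intro x hx
    rw [interior_Icc] at hx
    exact (hsub ⟨hx.1, hx.2.trans hmu⟩).1
  have h1 : f a < f m := hmono (Set.left_mem_Icc.mpr ham.le)
    ⟨ham.le, le_rfl⟩ ham
  have h2 : f m ≤ f a := (hsub ⟨ham, hmu⟩).2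
  linarith

theorem bz_component_comparison_bistable
    (r b h c : ℝ) (hr : 1 ≤ r) (hb : 0 < b) (hh : 0 ≤ h) (hc : 0 < c)
    (φ ψ : ℝ → ℝ) (hw : IsBZWavefront r b h c φ ψ) :
    ∀ t : ℝ, φ t < ψ t := by
  by_contra hcon
  push_neg at hcon
  obtain ⟨t0, ht0⟩ := hcon
  set u : ℝ → ℝ := fun t => φ t - ψ t with hu
  have hu2 : ContDiff ℝ 2 u := hw.phi_smooth.sub hw.psi_smooth
  have hucont : Continuous u := hu2.continuous
  have hbot : Tendsto u atBot (nhds 0) := by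
    simpa using hw.phi_bot.sub hw.psi_bot
  have htop : Tendsto u atTop (nhds 0) := by
    simpa using hw.phi_top.sub hw.psi_top
  have hcoc : Tendsto u (cocompact ℝ) (nhds 0) := by
    rw [cocompact_eq_atBot_atTop]
    exact tendsto_sup.mpr ⟨hbot, htop⟩
  obtain ⟨t1, ht1max, ht1nonneg⟩ : ∃ t1, (∀ t, u t ≤ u t1) ∧ 0 ≤ u t1 := by
    by_cases hpos : ∃ s, 0 < u s
    · obtain ⟨s, hs⟩ := hpos
      obtain ⟨t1, ht1⟩ := hucont.exists_forall_ge' s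
        ((hcoc.eventually_lt_const hs).mono fun x hx => hx.le)
      exact ⟨t1, ht1, le_trans hs.le (ht1 s)⟩
    · push_neg at hpos
      have h0 : u t0 = 0 := le_antisymm (hpos t0) (sub_nonneg.mpr ht0)
      exact ⟨t0, fun t => by rw [h0]; exact hpos t, h0.ge⟩
  have hmax : IsLocalMax u t1 := Filter.Eventually.of_forall ht1max
  have hd2 : deriv (deriv u) t1 ≤ 0 := aux_deriv2_nonpos hu2 hmax
  have hd0 : deriv u t1 = 0 := hmax.deriv_eq_zero
  have hφd : Differentiable ℝ φ := hw.phi_smooth.differentiable (by norm_num)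
  have hψd : Differentiable ℝ ψ := hw.psi_smooth.differentiable (by norm_num)
  have hφ'd : Differentiable ℝ (deriv φ) :=
    (aux_deriv_contDiff hw.phi_smooth).differentiable one_ne_zero
  have hψ'd : Differentiable ℝ (deriv ψ) :=
    (aux_deriv_contDiff hw.psi_smooth).differentiable one_ne_zero
  have hud : deriv u = fun t => deriv φ t - deriv ψ t :=
    funext fun t => deriv_sub (hφd t) (hψd t)
  have hder : deriv φ t1 = deriv ψ t1 := by
    have := congrFun hud t1
    rw [hd0] at this
    linarith [this.symm]
  have hud2 : deriv (deriv u) t1 = deriv (deriv φ) t1 - deriv (deriv ψ) t1 := by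
    rw [hud]
    exact deriv_sub (hφ'd t1) (hψ'd t1)
  rw [hud2] at hd2
  have e1 := hw.eq_phi t1
  have e2 := hw.eq_psi t1
  have hP : 0 < b * φ (t1 - c * h) * (1 - ψ t1) :=
    mul_pos (mul_pos hb (hw.phi_pos _)) (sub_pos.mpr (hw.psi_lt_one t1))
  have hBA : ψ t1 ≤ φ t1 := sub_nonneg.mp ht1nonneg
  have hA : 0 < φ t1 := hw.phi_pos t1
  have hA1 : φ t1 < 1 := hw.phi_lt_one t1
  nlinarith [mul_nonneg (mul_nonneg hA.le (by linarith : (0:ℝ) ≤ r))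
      (sub_nonneg.mpr hBA),
    mul_nonneg (mul_nonneg hA.le (by linarith : (0:ℝ) ≤ r - 1))
      (by linarith : (0:ℝ) ≤ 1 - φ t1)]
end

section
/- Let r ∈ (0, 1], b > 0, h ≥ 0, c > 0, and let (φ, ψ) be a monotone wavefront profile of the Belousov–Zhabotinsky system with parameters (r, b, h, c). Set M := max{1, 2b}. Then ψ(t)² < M·φ(t) for all t ∈ ℝ. -/
set_option maxHeartbeats 1000000


open Real Filter Asymptotics

lemma second_deriv_test {f f' : ℝ → ℝ} {a L : ℝ}
    (hf : ∀ t, HasDerivAt f (f' t) t) (hf' : HasDerivAt f' L a)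
    (hmin : IsLocalMin f a) : 0 ≤ L := by
  by_contra hL
  push_neg at hL
  have hfa0 : f' a = 0 := by
    have h1 := hmin.deriv_eq_zero
    rwa [(hf a).deriv] at h1
  have hslope : Tendsto (slope f' a) (nhdsWithin a {a}ᶜ) (nhds L) :=
    hasDerivAt_iff_tendsto_slope.mp hf'
  have hev : ∀ᶠ t in nhdsWithin a {a}ᶜ, slope f' a t < 0 :=
    hslope.eventually_lt_const hL
  rw [eventually_nhdsWithin_iff] at hev
  have hcomb := hev.and hmin
  rw [Metric.eventually_nhds_iff] at hcomb
  obtain ⟨ε, hε, hball⟩ := hcomb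
  have hf'neg : ∀ x ∈ Set.Ioo a (a + ε/2), f' x < 0 := by
    intro x hx
    have hd : dist x a < ε := by
      rw [Real.dist_eq, abs_of_pos (by linarith [hx.1])]
      linarith [hx.2]
    have hs := (hball hd).1 (by simp [ne_of_gt hx.1])
    rw [slope_def_field, hfa0] at hs
    have hxa : 0 < x - a := by linarith [hx.1]
    have h0 : (f' x - 0) / (x - a) < 0 := hs
    rw [div_neg_iff] at h0
    rcases h0 with ⟨h1, h2⟩ | ⟨h1, h2⟩
    · linarith
    · linarith
  have hanti : StrictAntiOn f (Set.Icc a (a + ε/2)) := by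
    apply strictAntiOn_of_deriv_neg (convex_Icc _ _)
    · exact (Differentiable.continuous (fun x => (hf x).differentiableAt)).continuousOn
    · intro x hx
      rw [interior_Icc] at hx
      rw [(hf x).deriv]
      exact hf'neg x hx
  have h1 : f (a + ε/4) < f a :=
    hanti (Set.left_mem_Icc.mpr (by linarith)) ⟨by linarith, by linarith⟩ (by linarith)
  have h2 : f a ≤ f (a + ε/4) := by
    refine (hball ?_).2
    rw [Real.dist_eq, abs_of_pos (by linarith)]
    linarith
  linarith

lemma bz_localmin_false
    (r b h c : ℝ) (hr0 : 0 < r) (hr1 : r ≤ 1) (hb : 0 < b) (hh : 0 ≤ h) (hc : 0 < c)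
    (φ ψ : ℝ → ℝ) (hw : IsBZWavefront r b h c φ ψ) (t0 : ℝ)
    (hmin : IsLocalMin (fun t => max 1 (2*b) * φ t - ψ t ^ 2) t0)
    (hle : max 1 (2*b) * φ t0 - ψ t0 ^ 2 ≤ 0) : False := by
  set M := max 1 (2*b) with hM
  have hM1 : (1:ℝ) ≤ M := le_max_left _ _
  have hM2 : 2*b ≤ M := le_max_right _ _
  -- differentiability
  have hφ2 : ContDiff ℝ ((1:ℕ)+1) φ := by exact_mod_cast hw.phi_smooth
  have hψ2 : ContDiff ℝ ((1:ℕ)+1) ψ := by exact_mod_cast hw.psi_smooth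
  have hφ1 : Differentiable ℝ φ := hφ2.differentiable (by norm_num)
  have hψ1 : Differentiable ℝ ψ := hψ2.differentiable (by norm_num)
  have hφd : Differentiable ℝ (deriv φ) := (contDiff_succ_iff_deriv.mp hφ2).2.2.differentiable (by norm_num)
  have hψd : Differentiable ℝ (deriv ψ) := (contDiff_succ_iff_deriv.mp hψ2).2.2.differentiable (by norm_num)
  have Hφ : ∀ t, HasDerivAt φ (deriv φ t) t := fun t => (hφ1 t).hasDerivAt
  have Hψ : ∀ t, HasDerivAt ψ (deriv ψ t) t := fun t => (hψ1 t).hasDerivAt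
  have Hφ' : ∀ t, HasDerivAt (deriv φ) (deriv (deriv φ) t) t := fun t => (hφd t).hasDerivAt
  have Hψ' : ∀ t, HasDerivAt (deriv ψ) (deriv (deriv ψ) t) t := fun t => (hψd t).hasDerivAt
  -- first derivative of w
  have Hw : ∀ t, HasDerivAt (fun t => M * φ t - ψ t ^ 2)
      (M * deriv φ t - 2 * (ψ t * deriv ψ t)) t := by
    intro t
    have h1 := ((Hφ t).const_mul M).sub ((Hψ t).pow 2)
    exact h1.congr_deriv (by norm_num; ring)
  have Hw1 : HasDerivAt (fun t => M * deriv φ t - 2 * (ψ t * deriv ψ t))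
      (M * deriv (deriv φ) t0 - 2 * (deriv ψ t0 * deriv ψ t0 + ψ t0 * deriv (deriv ψ) t0)) t0 :=
    ((Hφ' t0).const_mul M).sub (((Hψ t0).mul (Hψ' t0)).const_mul 2)
  have h10 : M * deriv φ t0 - 2 * (ψ t0 * deriv ψ t0) = 0 := by
    have h1 := hmin.deriv_eq_zero
    rwa [(Hw t0).deriv] at h1
  have hW2 : 0 ≤ M * deriv (deriv φ) t0 - 2 * (deriv ψ t0 * deriv ψ t0 + ψ t0 * deriv (deriv ψ) t0) :=
    second_deriv_test Hw Hw1 hmin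
  -- monotonicity
  have hmono : φ (t0 - c*h) ≤ φ t0 := by
    have := strictMono_of_deriv_pos hw.dphi_pos
    exact this.monotone (by nlinarith)
  -- abbreviations
  set p := φ t0
  set q := ψ t0
  set φh := φ (t0 - c*h)
  set p' := deriv φ t0
  set q' := deriv ψ t0
  set p'' := deriv (deriv φ) t0
  set q'' := deriv (deriv ψ) t0
  have eφ : p'' - c * p' + p * (1 - r - p + r * q) = 0 := hw.eq_phi t0
  have eψ : q'' - c * q' + b * φh * (1 - q) = 0 := hw.eq_psi t0
  have hp0 : 0 < p := hw.phi_pos t0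
  have hp1 : p < 1 := hw.phi_lt_one t0
  have hq0 : 0 < q := hw.psi_pos t0
  have hq1 : q < 1 := hw.psi_lt_one t0
  have hq' : 0 < q' := hw.dpsi_pos t0
  have hph0 : 0 < φh := hw.phi_pos _
  clear hmin Hw Hw1 Hφ Hψ Hφ' Hψ' hφ1 hψ1 hφd hψd hφ2 hψ2 hw
  have hMp : M * p ≤ q^2 := by linarith
  -- the key substituted inequality
  have e1 : M * (p'' - c * p' + p * (1 - r - p + r * q)) = 0 := by rw [eφ]; ring
  have e2 : (2*q) * (q'' - c * q' + b * φh * (1 - q)) = 0 := by rw [eψ]; ring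
  have e3 : c * (M * p' - 2 * (q * q')) = 0 := by rw [h10]; ring
  have key : 0 ≤ -(M * (p * (1 - r - p + r * q))) + 2*b*(q*(φh*(1-q))) - 2*q'^2 := by
    nlinarith [hW2, e1, e2, e3]
  -- algebraic estimates
  have k1 : 2*b*(1-q) + q ≤ M := by nlinarith [mul_nonneg (sub_nonneg.mpr hM2) (sub_nonneg.mpr hq1.le), mul_nonneg (sub_nonneg.mpr hM1) hq0.le]
  have k2 : q*(M - q) ≤ M * (1 - r - p + r * q) := by
    nlinarith [mul_nonneg (mul_nonneg (by linarith : (0:ℝ) ≤ M) (by linarith : (0:ℝ) ≤ 1 - r)) (by linarith : (0:ℝ) ≤ 1 - q)]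
  have k3a : 2*b*(q*(1-q)) ≤ q*(M - q) := by nlinarith [mul_le_mul_of_nonneg_left k1 hq0.le]
  have k3b : 2*b*(q*(φh*(1-q))) ≤ 2*b*(q*(1-q))*p := by
    nlinarith [mul_le_mul_of_nonneg_left hmono (mul_nonneg (mul_nonneg (by linarith : (0:ℝ) ≤ 2*b) hq0.le) (by linarith : (0:ℝ) ≤ 1-q))]
  have k3c : 2*b*(q*(1-q))*p ≤ (M * (1 - r - p + r * q))*p := by
    have := mul_le_mul_of_nonneg_right (k3a.trans k2) hp0.le
    linarith
  have k4 : 2*b*(q*(φh*(1-q))) ≤ M * (p * (1 - r - p + r * q)) := by nlinarith [k3b, k3c]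
  nlinarith [key, k4, sq_nonneg q', hq']

theorem bz_square_comparison
    (r b h c : ℝ) (hr0 : 0 < r) (hr1 : r ≤ 1) (hb : 0 < b) (hh : 0 ≤ h) (hc : 0 < c)
    (φ ψ : ℝ → ℝ) (hw : IsBZWavefront r b h c φ ψ) :
    ∀ t : ℝ, (ψ t) ^ 2 < max 1 (2 * b) * φ t := by

  by_contra hcon
  push_neg at hcon
  obtain ⟨t0, ht0⟩ := hcon
  set M := max 1 (2*b) with hM
  have hM1 : (1:ℝ) ≤ M := le_max_left _ _
  set w : ℝ → ℝ := fun t => M * φ t - ψ t ^ 2 with hwdef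
  have hwt0 : w t0 ≤ 0 := by simp only [hwdef]; linarith
  have hcontw : Continuous w := by
    have h1 : Continuous φ := (hw.phi_smooth.differentiable (by norm_num)).continuous
    have h2 : Continuous ψ := (hw.psi_smooth.differentiable (by norm_num)).continuous
    continuity
  by_cases hneg : ∃ t1, w t1 < 0
  · obtain ⟨t1, ht1⟩ := hneg
    -- limits of w
    have hbotw : Tendsto w atBot (nhds 0) := by
      have := ((hw.phi_bot.const_mul M).sub (hw.psi_bot.pow 2))
      simpa using this
    have htopw : Tendsto w atTop (nhds (M - 1)) := by
      have := ((hw.phi_top.const_mul M).sub (hw.psi_top.pow 2))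
      simpa using this
    have hevbot : ∀ᶠ t in atBot, w t1 < w t :=
      hbotw.eventually (eventually_gt_nhds ht1)
    have hevtop : ∀ᶠ t in atTop, w t1 < w t :=
      htopw.eventually (eventually_gt_nhds (by linarith : w t1 < M - 1))
    obtain ⟨A, hA⟩ := eventually_atBot.mp hevbot
    obtain ⟨B, hB⟩ := eventually_atTop.mp hevtop
    set A' := min A (t1 - 1) with hA'
    set B' := max B (t1 + 1) with hB'
    have hA't1 : A' < t1 := lt_of_le_of_lt (min_le_right _ _) (by linarith)
    have ht1B' : t1 < B' := lt_of_lt_of_le (by linarith) (le_max_right _ _)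
    obtain ⟨c0, hc0mem, hc0min⟩ :=
      (isCompact_Icc (a := A') (b := B')).exists_isMinOn
        (Set.nonempty_Icc.mpr (by linarith)) hcontw.continuousOn
    have hc0t1 : w c0 ≤ w t1 := hc0min ⟨hA't1.le, ht1B'.le⟩
    have hwA : w t1 < w A' := hA A' (min_le_left _ _)
    have hwB : w t1 < w B' := hB B' (le_max_left _ _)
    have hc0A : A' < c0 := by
      rcases lt_or_eq_of_le hc0mem.1 with h | h
      · exact h
      · exfalso; rw [h] at hwA; linarith
    have hc0B : c0 < B' := by
      rcases lt_or_eq_of_le hc0mem.2 with h | h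
      · exact h
      · exfalso; rw [← h] at hwB; linarith
    have hlocal : IsLocalMin w c0 := hc0min.isLocalMin (Icc_mem_nhds hc0A hc0B)
    rw [hwdef] at hlocal
    have hc0le : w c0 ≤ 0 := by linarith
    rw [hwdef] at hc0le
    exact bz_localmin_false r b h c hr0 hr1 hb hh hc φ ψ hw c0 hlocal hc0le
  · push_neg at hneg
    have hlocal : IsLocalMin w t0 := by
      apply Filter.Eventually.of_forall
      intro t
      have h1 := hneg t
      have h2 := hneg t0
      simp only [hwdef] at *
      linarith
    rw [hwdef] at hlocal hwt0
    exact bz_localmin_false r b h c hr0 hr1 hb hh hc φ ψ hw t0 hlocal hwt0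
end

section
/- Let r ∈ (0, 1], b > 0, h ≥ 0, c > 0. If there exists a monotone wavefront profile of the Belousov–Zhabotinsky system with parameters (r, b, h, c), then c ≥ 2·√(1 − r). -/
open Real Filter Asymptotics

lemma aux_v (c ω a t : ℝ) :
    HasDerivAt (fun t => Real.exp (c*t/2) * Real.sin (ω*(t-a)))
      (Real.exp (c*t/2) * (c/2 * Real.sin (ω*(t-a)) + ω * Real.cos (ω*(t-a)))) t := by
  have he : HasDerivAt (fun t : ℝ => Real.exp (c*t/2)) (Real.exp (c*t/2) * (c/2)) t :=
    by simpa using (((hasDerivAt_id t).const_mul c).div_const 2).exp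
  have hs : HasDerivAt (fun t : ℝ => Real.sin (ω*(t-a))) (Real.cos (ω*(t-a)) * ω) t :=
    by simpa using (((hasDerivAt_id t).sub_const a).const_mul ω).sin
  have := he.fun_mul hs
  refine this.congr_deriv ?_
  ring

lemma aux_v1 (c ω a q t : ℝ) (hq : ω^2 = q - c^2/4) :
    HasDerivAt (fun t => Real.exp (c*t/2) * (c/2 * Real.sin (ω*(t-a)) + ω * Real.cos (ω*(t-a))))
      (c * (Real.exp (c*t/2) * (c/2 * Real.sin (ω*(t-a)) + ω * Real.cos (ω*(t-a))))
        - q * (Real.exp (c*t/2) * Real.sin (ω*(t-a)))) t := by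
  have he : HasDerivAt (fun t : ℝ => Real.exp (c*t/2)) (Real.exp (c*t/2) * (c/2)) t :=
    by simpa using (((hasDerivAt_id t).const_mul c).div_const 2).exp
  have hs : HasDerivAt (fun t : ℝ => Real.sin (ω*(t-a))) (Real.cos (ω*(t-a)) * ω) t :=
    by simpa using (((hasDerivAt_id t).sub_const a).const_mul ω).sin
  have hcc : HasDerivAt (fun t : ℝ => Real.cos (ω*(t-a))) (-Real.sin (ω*(t-a)) * ω) t :=
    by simpa using (((hasDerivAt_id t).sub_const a).const_mul ω).cos
  have hin : HasDerivAt (fun t : ℝ => c/2 * Real.sin (ω*(t-a)) + ω * Real.cos (ω*(t-a)))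
      (c/2 * (Real.cos (ω*(t-a)) * ω) + ω * (-Real.sin (ω*(t-a)) * ω)) t :=
    (hs.const_mul (c/2)).add (hcc.const_mul ω)
  have := he.fun_mul hin
  refine this.congr_deriv ?_
  have h : ω * ω = q - c^2/4 := by rw [← hq]; ring
  linear_combination (-(Real.exp (c*t/2) * Real.sin (ω*(t-a)))) * h

lemma no_pos_supersolution (c q T : ℝ) (hq : c^2/4 < q)
    (φ φ' φ'' : ℝ → ℝ)
    (h1 : ∀ t, HasDerivAt φ (φ' t) t) (h2 : ∀ t, HasDerivAt φ' (φ'' t) t)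
    (hpos : ∀ t ≤ T, 0 < φ t)
    (hineq : ∀ t ≤ T, φ'' t ≤ c * φ' t - q * φ t) : False := by
  set ω : ℝ := Real.sqrt (q - c^2/4) with hωdef
  have hω : 0 < ω := Real.sqrt_pos.mpr (by linarith)
  have hω2 : ω^2 = q - c^2/4 := Real.sq_sqrt (by linarith)
  set a : ℝ := T - Real.pi / ω with hadef
  have hπω : 0 < Real.pi / ω := div_pos Real.pi_pos hω
  have haT : a < T := by simp [hadef]; linarith
  set v : ℝ → ℝ := fun t => Real.exp (c*t/2) * Real.sin (ω*(t-a)) with hvdef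
  set v1 : ℝ → ℝ := fun t => Real.exp (c*t/2) * (c/2 * Real.sin (ω*(t-a)) + ω * Real.cos (ω*(t-a))) with hv1def
  set g : ℝ → ℝ := fun t => Real.exp (-(c*t)) * (φ t * v1 t - φ' t * v t) with hgdef
  have hg : ∀ t, HasDerivAt g (Real.exp (-(c*t)) * (v t * (c * φ' t - q * φ t - φ'' t))) t := by
    intro t
    have he : HasDerivAt (fun t : ℝ => Real.exp (-(c*t))) (Real.exp (-(c*t)) * (-c)) t :=
      by simpa using (((hasDerivAt_id t).const_mul c).neg).exp
    have hin : HasDerivAt (fun t => φ t * v1 t - φ' t * v t)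
        (φ' t * v1 t + φ t * (c * v1 t - q * v t) - (φ'' t * v t + φ' t * v1 t)) t :=
      ((h1 t).mul (aux_v1 c ω a q t hω2)).sub ((h2 t).mul (aux_v c ω a t))
    have := he.fun_mul hin
    refine this.congr_deriv ?_
    ring
  have mono : MonotoneOn g (Set.Icc a T) := by
    apply monotoneOn_of_deriv_nonneg (convex_Icc a T)
    · exact fun t _ => (hg t).continuousAt.continuousWithinAt
    · rw [interior_Icc]
      exact fun t _ => (hg t).differentiableAt.differentiableWithinAt
    · rw [interior_Icc]
      intro t ht
      rw [(hg t).deriv]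
      have hvnn : 0 ≤ v t := by
        apply mul_nonneg (Real.exp_pos _).le
        apply Real.sin_nonneg_of_nonneg_of_le_pi
        · have : a ≤ t := ht.1.le
          nlinarith
        · have : t ≤ T := ht.2.le
          have : ω * (t - a) ≤ ω * (T - a) := by nlinarith
          calc ω * (t - a) ≤ ω * (T - a) := this
            _ = Real.pi := by
              rw [hadef, sub_sub_cancel]; field_simp
      have := hineq t ht.2.le
      have : 0 ≤ c * φ' t - q * φ t - φ'' t := by linarith
      positivity
  have hga : g a = Real.exp (-(c*a)) * (Real.exp (c*a/2) * ω) * φ a := by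
    simp only [hgdef, hvdef, hv1def]
    simp
    ring
  have hgT : g T = -(Real.exp (-(c*T)) * (Real.exp (c*T/2) * ω) * φ T) := by
    have hπ : ω * (T - a) = Real.pi := by rw [hadef, sub_sub_cancel]; field_simp
    simp only [hgdef, hvdef, hv1def, hπ]
    simp
    ring
  have hle := mono (Set.left_mem_Icc.mpr haT.le) (Set.right_mem_Icc.mpr haT.le) haT.le
  have hga_pos : 0 < g a := by
    rw [hga]
    have := hpos a haT.le
    positivity
  have hgT_neg : g T < 0 := by
    rw [hgT]
    have := hpos T le_rfl
    have : 0 < Real.exp (-(c*T)) * (Real.exp (c*T/2) * ω) * φ T := by positivity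
    linarith
  linarith

theorem bz_monostable_speed_lower_bound
    (r b h c : ℝ) (hr0 : 0 < r) (hr1 : r ≤ 1) (hb : 0 < b) (hh : 0 ≤ h) (hc : 0 < c)
    (hex : ∃ φ ψ : ℝ → ℝ, IsBZWavefront r b h c φ ψ) :
    2 * Real.sqrt (1 - r) ≤ c := by
  obtain ⟨φ, ψ, W⟩ := hex
  by_contra hlt
  push_neg at hlt
  have hr1' : (0:ℝ) ≤ 1 - r := by linarith
  have hc2 : c^2 < 4 * (1 - r) := by
    have h1 : c^2 < (2 * Real.sqrt (1-r))^2 := by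
      have := Real.sqrt_nonneg (1-r)
      nlinarith
    have h2 : (2 * Real.sqrt (1-r))^2 = 4 * (1-r) := by
      rw [mul_pow, Real.sq_sqrt hr1']; ring
    linarith [h1, h2.le]
  set q : ℝ := (c^2/4 + (1-r))/2 with hqdef
  have hq1 : c^2/4 < q := by rw [hqdef]; linarith
  have hq2 : q < 1 - r := by rw [hqdef]; linarith
  have hε : (0:ℝ) < 1 - r - q := by linarith
  obtain ⟨T, hT⟩ : ∃ T, ∀ t ≤ T, φ t < 1 - r - q := by
    have := (W.phi_bot.eventually_lt_const hε)
    rw [eventually_atBot] at this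
    exact this
  have hdφ : Differentiable ℝ φ := W.phi_smooth.differentiable (by norm_num)
  have hcd1 : ContDiff ℝ 1 (deriv φ) := by
    have h2 : ContDiff ℝ ((1:ℕ∞)+1) φ := by
      have := W.phi_smooth
      norm_num at this ⊢
      exact this
    exact (contDiff_succ_iff_deriv.mp h2).2.2
  have hdφ' : Differentiable ℝ (deriv φ) := hcd1.differentiable one_ne_zero
  refine no_pos_supersolution c q T hq1 φ (deriv φ) (deriv (deriv φ))
    (fun t => (hdφ t).hasDerivAt) (fun t => (hdφ' t).hasDerivAt)
    (fun t _ => W.phi_pos t) ?_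
  intro t ht
  have heq := W.eq_phi t
  have hφq : q ≤ 1 - r - φ t + r * ψ t := by
    have h1 := hT t ht
    have h2 : 0 < r * ψ t := mul_pos hr0 (W.psi_pos t)
    linarith
  have hφpos := (W.phi_pos t).le
  nlinarith [mul_le_mul_of_nonneg_left hφq hφpos]
end

section
/- Let r ∈ (0, 1], b > 0, h ≥ 0, c > 0, and let (φ, ψ) be a monotone wavefront profile of the Belousov–Zhabotinsky system with parameters (r, b, h, c). Then the limit lim_{t → −∞} φ'(t)/φ(t) exists, is finite, and belongs to the set {λ(c), μ(c)}, where λ(c) = (c − √(c² − 4(1 − r)))/2 and μ(c) = (c + √(c² − 4(1 − r)))/2 are the roots of the characteristic equation x² − cx + (1 − r) = 0. -/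
set_option maxHeartbeats 1000000
open Set Filter

section BZauxiliary

lemma BZaux.diff_le {f : ℝ → ℝ} (hf : Differentiable ℝ f) {a b m : ℝ} (hab : a ≤ b)
    (h : ∀ t ∈ Set.Icc a b, deriv f t ≤ m) : f b - f a ≤ m * (b - a) := by
  set g : ℝ → ℝ := fun t => m * t - f t with hg
  have hgd : ∀ t : ℝ, HasDerivAt g (m - deriv f t) t := fun t => by
    have := ((hasDerivAt_id t).const_mul m).sub (hf t).hasDerivAt
    simp only [id_eq, mul_one] at this
    exact this
  have hmono : MonotoneOn g (Set.Icc a b) := by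
    apply monotoneOn_of_deriv_nonneg (convex_Icc a b)
    · exact fun t _ => ((hgd t).continuousAt).continuousWithinAt
    · exact fun t _ => ((hgd t).differentiableAt).differentiableWithinAt
    · intro t ht
      rw [(hgd t).deriv]
      have := h t (interior_subset ht)
      linarith
  have := hmono (Set.left_mem_Icc.2 hab) (Set.right_mem_Icc.2 hab) hab
  simp only [hg] at this
  linarith

lemma BZaux.diff_ge {f : ℝ → ℝ} (hf : Differentiable ℝ f) {a b m : ℝ} (hab : a ≤ b)
    (h : ∀ t ∈ Set.Icc a b, m ≤ deriv f t) : m * (b - a) ≤ f b - f a := by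
  have := BZaux.diff_le hf.neg hab (m := -m) (fun t ht => by
    rw [deriv.neg]; have := h t ht; linarith)
  simp at this
  linarith

/-- Backward persistence: if `f t0 > A` and the derivative is negative whenever
`f ≥ A` (for `t ≤ t0`), then `f ≥ A` on all of `(-∞, t0]`. -/
lemma BZaux.backward_persist {f : ℝ → ℝ} (hf : Differentiable ℝ f) {t0 A : ℝ}
    (h0 : A < f t0) (hd : ∀ t ≤ t0, A ≤ f t → deriv f t < 0) :
    ∀ t ≤ t0, A ≤ f t := by
  intro t1 ht1
  by_contra hlt
  push_neg at hlt
  have ht1' : t1 < t0 := lt_of_le_of_ne ht1 (by rintro rfl; linarith)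
  set S : Set ℝ := {t ∈ Set.Icc t1 t0 | f t ≤ A} with hS
  have hSclosed : IsClosed S := by
    have : S = Set.Icc t1 t0 ∩ f ⁻¹' (Set.Iic A) := by
      ext x; simp [hS, Set.mem_setOf_eq, and_comm]
    rw [this]
    exact isClosed_Icc.inter (isClosed_Iic.preimage hf.continuous)
  have hSne : S.Nonempty := ⟨t1, ⟨Set.left_mem_Icc.2 ht1'.le, hlt.le⟩⟩
  have hSbdd : BddAbove S := (BddAbove.mono (fun x hx => hx.1) bddAbove_Icc)
  set t2 := sSup S with ht2def
  have ht2S : t2 ∈ S := hSclosed.csSup_mem hSne hSbdd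
  have ht2le : f t2 ≤ A := ht2S.2
  have ht2Icc : t2 ∈ Set.Icc t1 t0 := ht2S.1
  have ht2lt : t2 < t0 := lt_of_le_of_ne ht2Icc.2 (fun hEq => by rw [hEq] at ht2le; linarith)
  have habove : ∀ s ∈ Set.Ioc t2 t0, A < f s := by
    intro s hs
    by_contra hsa
    push_neg at hsa
    have hsS : s ∈ S := ⟨⟨le_trans ht2Icc.1 hs.1.le, hs.2⟩, hsa⟩
    exact absurd (le_csSup hSbdd hsS) (not_le.2 hs.1)
  have hanti : StrictAntiOn f (Set.Icc t2 t0) := by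
    apply strictAntiOn_of_deriv_neg (convex_Icc t2 t0) hf.continuous.continuousOn
    intro x hx
    rw [interior_Icc] at hx
    exact hd x hx.2.le (habove x ⟨hx.1, hx.2.le⟩).le
  have := hanti (Set.left_mem_Icc.2 ht2lt.le) (Set.right_mem_Icc.2 ht2lt.le) ht2lt
  linarith

/-- Mirror: if `f t0 < A` and the derivative is positive whenever `f ≤ A`
(for `t ≤ t0`), then `f ≤ A` on `(-∞, t0]`. -/
lemma BZaux.backward_persist' {f : ℝ → ℝ} (hf : Differentiable ℝ f) {t0 A : ℝ}
    (h0 : f t0 < A) (hd : ∀ t ≤ t0, f t ≤ A → 0 < deriv f t) :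
    ∀ t ≤ t0, f t ≤ A := by
  have := BZaux.backward_persist (f := fun t => -f t) hf.neg (t0 := t0) (A := -A)
    (by simpa using h0) (fun t ht hA => by
      rw [deriv.fun_neg]
      have := hd t ht (by linarith [neg_le_neg_iff.mp hA])
      linarith)
  intro t ht
  have := this t ht
  linarith

/-- Forward persistence: if `f t0 < A` and the derivative is negative on `[t0, T]`
whenever `f ≤ A`, then `f < A` on `[t0, T]`. -/
lemma BZaux.forward_persist {f : ℝ → ℝ} (hf : Differentiable ℝ f) {t0 T A : ℝ}
    (h0 : f t0 < A) (hd : ∀ t ∈ Set.Icc t0 T, f t ≤ A → deriv f t < 0) :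
    ∀ t ∈ Set.Icc t0 T, f t < A := by
  intro t1 ht1
  by_contra hge
  push_neg at hge
  have ht01 : t0 < t1 := lt_of_le_of_ne ht1.1 (by rintro rfl; linarith)
  set S : Set ℝ := {t ∈ Set.Icc t0 t1 | A ≤ f t} with hS
  have hSclosed : IsClosed S := by
    have : S = Set.Icc t0 t1 ∩ f ⁻¹' (Set.Ici A) := by
      ext x; simp [hS, Set.mem_setOf_eq, and_comm]
    rw [this]
    exact isClosed_Icc.inter (isClosed_Ici.preimage hf.continuous)
  have hSne : S.Nonempty := ⟨t1, ⟨Set.right_mem_Icc.2 ht01.le, hge⟩⟩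
  have hSbdd : BddBelow S := (BddBelow.mono (fun x hx => hx.1) bddBelow_Icc)
  set t2 := sInf S with ht2def
  have ht2S : t2 ∈ S := hSclosed.csInf_mem hSne hSbdd
  have ht2Icc : t2 ∈ Set.Icc t0 t1 := ht2S.1
  have ht2gt : t0 < t2 := lt_of_le_of_ne ht2Icc.1 (by rintro h; rw [← h] at ht2S; linarith [ht2S.2])
  have hbelow : ∀ s ∈ Set.Ico t0 t2, f s < A := by
    intro s hs
    by_contra hsa
    push_neg at hsa
    have hsS : s ∈ S := ⟨⟨hs.1, le_trans hs.2.le ht2Icc.2⟩, hsa⟩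
    exact absurd (csInf_le hSbdd hsS) (not_le.2 hs.2)
  have hanti : StrictAntiOn f (Set.Icc t0 t2) := by
    apply strictAntiOn_of_deriv_neg (convex_Icc t0 t2) hf.continuous.continuousOn
    intro x hx
    rw [interior_Icc] at hx
    exact hd x ⟨hx.1.le, le_trans hx.2.le (le_trans ht2Icc.2 ht1.2)⟩
      (hbelow x ⟨hx.1.le, hx.2⟩).le
  have := hanti (Set.left_mem_Icc.2 ht2gt.le) (Set.right_mem_Icc.2 ht2gt.le) ht2gt
  linarith [ht2S.2]

/-- Mirror: if `f t0 > A` and the derivative is positive on `[t0, T]` whenever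
`f ≥ A`, then `f > A` on `[t0, T]`. -/
lemma BZaux.forward_persist' {f : ℝ → ℝ} (hf : Differentiable ℝ f) {t0 T A : ℝ}
    (h0 : A < f t0) (hd : ∀ t ∈ Set.Icc t0 T, A ≤ f t → 0 < deriv f t) :
    ∀ t ∈ Set.Icc t0 T, A < f t := by
  have := BZaux.forward_persist (f := fun t => -f t) hf.neg (t0 := t0) (T := T) (A := -A)
    (by simpa using h0) (fun t ht hA => by
      rw [deriv.fun_neg]
      have := hd t ht (by linarith [neg_le_neg_iff.mp hA])
      linarith)
  intro t ht
  have := this t ht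
  linarith
/-- No backward blow-up: a positive function on all of ℝ cannot satisfy
`f' ≤ -f²/2` in the region `f ≥ M` to the left of a point where `f > M`. -/
lemma BZaux.no_backward_blowup {f : ℝ → ℝ} (hf : Differentiable ℝ f) {t0 M : ℝ}
    (hM : 0 < M) (hpos : ∀ t, 0 < f t) (h0 : M < f t0)
    (hd : ∀ t ≤ t0, M ≤ f t → deriv f t ≤ -(f t) ^ 2 / 2) : False := by
  have hge : ∀ t ≤ t0, M ≤ f t := by
    apply BZaux.backward_persist hf h0
    intro t ht hA
    have := hd t ht hA
    nlinarith [hpos t]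
  set g : ℝ → ℝ := fun t => (f t)⁻¹ with hg
  have hgd : ∀ t : ℝ, HasDerivAt g (-deriv f t / (f t) ^ 2) t := fun t =>
    ((hf t).hasDerivAt).inv (ne_of_gt (hpos t))
  have hgdiff : Differentiable ℝ g := fun t => (hgd t).differentiableAt
  have hgderiv : ∀ t ≤ t0, (1:ℝ)/2 ≤ deriv g t := by
    intro t ht
    rw [(hgd t).deriv]
    have h1 := hd t ht (hge t ht)
    have h2 := hpos t
    rw [le_div_iff₀ (by positivity)]
    nlinarith
  set t1 := t0 - 2 * g t0 - 2 with ht1def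
  have hgt0pos : 0 < g t0 := by simp only [hg]; exact inv_pos.2 (hpos t0)
  have ht1le : t1 ≤ t0 := by simp [ht1def]; linarith
  have := BZaux.diff_ge hgdiff ht1le (m := 1/2) (fun t htI => hgderiv t (le_trans htI.2 le_rfl))
  have hgt1pos : 0 < g t1 := by simp only [hg]; exact inv_pos.2 (hpos t1)
  have : (1:ℝ)/2 * (t0 - t1) ≤ g t0 - g t1 := this
  rw [ht1def] at this
  linarith
/-- At a last down-crossing of the level `m`, the derivative is nonpositive. -/
lemma BZaux.exists_downcrossing {f : ℝ → ℝ} (hf : Differentiable ℝ f) {t1 t2 m : ℝ}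
    (h12 : t1 ≤ t2) (h1 : m < f t1) (h2 : f t2 < m) :
    ∃ t ∈ Set.Icc t1 t2, f t = m ∧ deriv f t ≤ 0 := by
  have h12' : t1 < t2 := lt_of_le_of_ne h12 (by rintro rfl; linarith)
  set S : Set ℝ := {t ∈ Set.Icc t1 t2 | m ≤ f t} with hS
  have hSclosed : IsClosed S := by
    have : S = Set.Icc t1 t2 ∩ f ⁻¹' (Set.Ici m) := by
      ext x; simp [hS, Set.mem_setOf_eq, and_comm]
    rw [this]
    exact isClosed_Icc.inter (isClosed_Ici.preimage hf.continuous)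
  have hSne : S.Nonempty := ⟨t1, ⟨Set.left_mem_Icc.2 h12, h1.le⟩⟩
  have hSbdd : BddAbove S := BddAbove.mono (fun x hx => hx.1) bddAbove_Icc
  set t3 := sSup S with ht3def
  have ht3S : t3 ∈ S := hSclosed.csSup_mem hSne hSbdd
  have ht3Icc : t3 ∈ Set.Icc t1 t2 := ht3S.1
  have ht3lt : t3 < t2 := lt_of_le_of_ne ht3Icc.2 (fun hEq => by
    rw [hEq] at ht3S; linarith [ht3S.2])
  have hafter : ∀ s ∈ Set.Ioc t3 t2, f s < m := by
    intro s hs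
    by_contra hsa
    push_neg at hsa
    exact absurd (le_csSup hSbdd ⟨⟨le_trans ht3Icc.1 hs.1.le, hs.2⟩, hsa⟩) (not_le.2 hs.1)
  have hIocmem : Set.Ioc t3 t2 ∈ nhdsWithin t3 (Set.Ioi t3) :=
    Ioc_mem_nhdsGT_of_mem ⟨le_refl t3, ht3lt⟩
  have hne : (nhdsWithin t3 (Set.Ioi t3)).NeBot := inferInstance
  have hfeq : f t3 = m := by
    have hub : f t3 ≤ m := by
      have htend : Filter.Tendsto f (nhdsWithin t3 (Set.Ioi t3)) (nhds (f t3)) :=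
        (hf.continuous.continuousAt).continuousWithinAt.tendsto
      apply le_of_tendsto htend
      filter_upwards [hIocmem] with s hs
      exact (hafter s hs).le
    exact le_antisymm hub ht3S.2
  refine ⟨t3, ht3Icc, hfeq, ?_⟩
  have hder : HasDerivAt f (deriv f t3) t3 := (hf t3).hasDerivAt
  rw [hasDerivAt_iff_tendsto_slope] at hder
  have hmono : nhdsWithin t3 (Set.Ioi t3) ≤ nhdsWithin t3 {t3}ᶜ :=
    nhdsWithin_mono t3 (fun x hx => ne_of_gt hx)
  apply le_of_tendsto (hder.mono_left hmono)
  filter_upwards [hIocmem] with s hs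
  have hslt : f s < f t3 := by rw [hfeq]; exact hafter s hs
  rw [slope_def_field]
  apply div_nonpos_of_nonpos_of_nonneg <;> [linarith; linarith [hs.1]]

lemma BZaux.halfmul {k a : ℝ} (hk : k ≠ 0) : k / 2 * (2 * a / k) = a := by
  field_simp

end BZauxiliary
open Real Filter Asymptotics

theorem bz_logarithmic_derivative_limit
    (r b h c : ℝ) (hr0 : 0 < r) (hr1 : r ≤ 1) (hb : 0 < b) (hh : 0 ≤ h) (hc : 0 < c)
    (φ ψ : ℝ → ℝ) (hw : IsBZWavefront r b h c φ ψ) :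
    ∃ L : ℝ, Tendsto (fun t : ℝ => deriv φ t / φ t) atBot (nhds L) ∧
      (L = (c - Real.sqrt (c ^ 2 - 4 * (1 - r))) / 2 ∨
       L = (c + Real.sqrt (c ^ 2 - 4 * (1 - r))) / 2) := by
  -- Smoothness facts
  have hsm : ContDiff ℝ ((1:WithTop ℕ∞) + 1) φ := by
    have := hw.phi_smooth
    norm_num at this ⊢
    exact this
  have hφd : Differentiable ℝ φ := (contDiff_succ_iff_deriv.mp hsm).1
  have hφ'd : Differentiable ℝ (deriv φ) :=
    ((contDiff_succ_iff_deriv.mp hsm).2.2).differentiable one_ne_zero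
  -- The logarithmic derivative u
  set u : ℝ → ℝ := fun t => deriv φ t / φ t with hu
  have hune : ∀ t, φ t ≠ 0 := fun t => ne_of_gt (hw.phi_pos t)
  have hud : ∀ t : ℝ, HasDerivAt u
      ((deriv (deriv φ) t * φ t - deriv φ t * deriv φ t) / (φ t) ^ 2) t := fun t =>
    ((hφ'd t).hasDerivAt).div ((hφd t).hasDerivAt) (hune t)
  have hu_diff : Differentiable ℝ u := fun t => (hud t).differentiableAt
  set ε : ℝ → ℝ := fun t => φ t - r * ψ t with hε
  have hukey : ∀ t : ℝ, deriv u t =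
      (-(u t) ^ 2 + c * u t - (1 - r)) + ε t := by
    intro t
    rw [(hud t).deriv]
    have heq := hw.eq_phi t
    have hφt := hune t
    have hφ'' : deriv (deriv φ) t = c * deriv φ t - φ t * (1 - r - φ t + r * ψ t) := by
      linarith
    rw [hφ'']
    simp only [hu, hε]
    field_simp
    ring
  have hu_pos : ∀ t, 0 < u t := fun t => div_pos (hw.dphi_pos t) (hw.phi_pos t)
  -- ε tends to 0 at -∞
  have hεlim : Tendsto ε atBot (nhds 0) := by
    rw [hε]
    have := hw.phi_bot.sub (hw.psi_bot.const_mul r)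
    simpa using this
  clear_value u ε
  have hεsmall : ∀ η : ℝ, 0 < η → ∃ T : ℝ, ∀ t ≤ T, |ε t| < η := by
    intro η hη
    have := (Metric.tendsto_nhds.mp hεlim) η hη
    rw [eventually_atBot] at this
    obtain ⟨T, hT⟩ := this
    refine ⟨T, fun t ht => ?_⟩
    have := hT t ht
    rwa [Real.dist_eq, sub_zero] at this
  -- A uniform bound on u near -∞
  set M : ℝ := 2 * c + 4 with hM
  clear_value M
  have hMpos : 0 < M - 1 := by simp only [hM]; linarith
  obtain ⟨T0, hT0⟩ := hεsmall 1 one_pos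
  have H1 : ∀ t ≤ T0, u t < M := by
    intro t ht
    by_contra hge
    push_neg at hge
    refine BZaux.no_backward_blowup hu_diff (t0 := t) (M := M - 1) hMpos hu_pos
      (by linarith) ?_
    intro s hs hA
    rw [hukey s]
    have hε1 : |ε s| < 1 := hT0 s (le_trans hs ht)
    have hε1' := (abs_lt.mp hε1).2
    have hx : 2 * c + 3 ≤ u s := by simp only [hM] at hA; linarith
    have hxx : (2 * c + 3) * 3 ≤ u s * (u s - 2 * c) :=
      mul_le_mul hx (by linarith) (by linarith) (by linarith [hu_pos s])
    nlinarith [hxx, hc.le]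
  -- The discriminant
  set D : ℝ := c ^ 2 - 4 * (1 - r) with hD
  clear_value D
  by_cases hDpos : 0 ≤ D
  · -- real roots
    set sq : ℝ := Real.sqrt D with hsq
    clear_value sq
    have hs0 : 0 ≤ sq := by rw [hsq]; exact Real.sqrt_nonneg _
    have hs2 : sq ^ 2 = D := by rw [hsq]; exact Real.sq_sqrt hDpos
    set lam : ℝ := (c - sq) / 2 with hlam
    set mu : ℝ := (c + sq) / 2 with hmu
    clear_value lam mu
    have hfact : ∀ x : ℝ, -x ^ 2 + c * x - (1 - r) = -((x - lam) * (x - mu)) := by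
      intro x
      simp only [hlam, hmu]
      have : sq ^ 2 = c ^ 2 - 4 * (1 - r) := by rw [hs2, hD]
      nlinarith [this]
    have hslec : sq ≤ c := by
      have h1 : D ≤ c ^ 2 := by simp only [hD]; linarith
      calc sq = Real.sqrt D := hsq
        _ ≤ Real.sqrt (c ^ 2) := Real.sqrt_le_sqrt h1
        _ = c := by rw [Real.sqrt_sq hc.le]
    have hlam0 : 0 ≤ lam := by simp only [hlam]; linarith
    have hlammu : lam ≤ mu := by simp only [hlam, hmu]; linarith
    have hmuM : mu < M - 1 := by simp only [hmu, hM]; linarith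
    -- The upper estimate: eventually u < mu + δ
    have Ha : ∀ δ : ℝ, 0 < δ → ∃ T : ℝ, ∀ t ≤ T, u t < mu + δ := by
      intro δ hδ
      set κ : ℝ := (δ / 2) * (δ / 2) with hκ
      clear_value κ
      have hκpos : 0 < κ := by rw [hκ]; positivity
      obtain ⟨Tη, hTη⟩ := hεsmall (κ / 2) (by positivity)
      refine ⟨min T0 Tη, fun t ht => ?_⟩
      by_contra hge
      push_neg at hge
      have hdneg : ∀ s ≤ t, mu + δ / 2 ≤ u s → deriv u s ≤ -(κ / 2) := by
        intro s hs hA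
        rw [hukey s, hfact (u s)]
        have hε' : |ε s| < κ / 2 :=
          hTη s (le_trans (le_trans hs ht) (min_le_right _ _))
        have h1 : δ / 2 ≤ u s - mu := by linarith
        have h2 : δ / 2 ≤ u s - lam := by linarith
        have h3 := (abs_lt.mp hε').2
        nlinarith [mul_le_mul h2 h1 (by linarith) (by linarith)]
      have hpers : ∀ s ≤ t, mu + δ / 2 ≤ u s := by
        apply BZaux.backward_persist hu_diff (show mu + δ / 2 < u t by linarith)
        intro s hs hA
        exact lt_of_le_of_lt (hdneg s hs hA) (by linarith)
      set t1 : ℝ := t - (2 * M / κ + 1) with ht1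
      clear_value t1
      have hMpos' : 0 < M := by linarith
      have ht1le : t1 ≤ t := by
        simp only [ht1]
        have : 0 < 2 * M / κ := by positivity
        linarith
      have hmean := BZaux.diff_le hu_diff ht1le (m := -(κ / 2))
        (fun s hsI => hdneg s hsI.2 (hpers s hsI.2))
      have hM1 := H1 t1 (le_trans ht1le (le_trans ht (min_le_left _ _)))
      have hid : κ / 2 * (2 * M / κ) = M := BZaux.halfmul (ne_of_gt hκpos)
      have hdist : t - t1 = 2 * M / κ + 1 := by simp only [ht1]; ring
      nlinarith [hu_pos t, hκpos]
    -- The lower estimate: eventually lam - δ < u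
    have Hb : ∀ δ : ℝ, 0 < δ → ∃ T : ℝ, ∀ t ≤ T, lam - δ < u t := by
      intro δ hδ
      by_cases hcase : lam ≤ δ
      · exact ⟨0, fun t _ => lt_of_le_of_lt (by linarith) (hu_pos t)⟩
      push_neg at hcase
      set κ : ℝ := (δ / 2) * (δ / 2) with hκ
      clear_value κ
      have hκpos : 0 < κ := by rw [hκ]; positivity
      obtain ⟨Tη, hTη⟩ := hεsmall (κ / 2) (by positivity)
      refine ⟨Tη - (2 * lam / κ + 1), fun t ht => ?_⟩
      by_contra hle
      push_neg at hle
      have hlampos : 0 < lam := lt_trans hδ hcase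
      have htT : t ≤ Tη := by
        have : 0 < 2 * lam / κ := by positivity
        linarith
      have hdneg : ∀ s ∈ Set.Icc t Tη, u s ≤ lam - δ / 2 → deriv u s ≤ -(κ / 2) := by
        intro s hsI hA
        rw [hukey s, hfact (u s)]
        have hε' : |ε s| < κ / 2 := hTη s hsI.2
        have h1 : δ / 2 ≤ lam - u s := by linarith
        have h2 : δ / 2 ≤ mu - u s := by linarith
        have h3 := (abs_lt.mp hε').2
        nlinarith [mul_le_mul h1 h2 (by linarith) (by linarith)]
      have hfp : ∀ s ∈ Set.Icc t Tη, u s < lam - δ / 2 := by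
        apply BZaux.forward_persist hu_diff (show u t < lam - δ / 2 by linarith)
        intro s hsI hA
        exact lt_of_le_of_lt (hdneg s hsI hA) (by linarith)
      have hmean := BZaux.diff_le hu_diff htT (m := -(κ / 2))
        (fun s hsI => hdneg s hsI (hfp s hsI).le)
      have hid : κ / 2 * (2 * lam / κ) = lam := BZaux.halfmul (ne_of_gt hκpos)
      have hdist : 2 * lam / κ + 1 ≤ Tη - t := by linarith
      nlinarith [hu_pos Tη, hκpos]
    -- convergence criterion
    have htend : ∀ L : ℝ,
        (∀ δ : ℝ, 0 < δ → ∃ T : ℝ, ∀ t ≤ T, L - δ < u t ∧ u t < L + δ) →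
        Tendsto u atBot (nhds L) := by
      intro L hL
      rw [Metric.tendsto_nhds]
      intro δ hδ
      obtain ⟨T, hT⟩ := hL δ hδ
      rw [eventually_atBot]
      refine ⟨T, fun t ht => ?_⟩
      have := hT t ht
      rw [Real.dist_eq, abs_lt]
      exact ⟨by linarith [this.1], by linarith [this.2]⟩
    by_cases hlm : lam = mu
    · -- double root: squeeze
      refine ⟨lam, htend lam ?_, Or.inl rfl⟩
      intro δ hδ
      obtain ⟨Ta, hTa⟩ := Ha δ hδ
      obtain ⟨Tb, hTb⟩ := Hb δ hδ
      refine ⟨min Ta Tb, fun t ht => ?_⟩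
      constructor
      · exact hTb t (le_trans ht (min_le_right _ _))
      · have := hTa t (le_trans ht (min_le_left _ _))
        rw [hlm]
        exact this
    · -- two distinct roots
      have hlmlt : lam < mu := lt_of_le_of_ne hlammu hlm
      set m : ℝ := (lam + mu) / 2 with hm
      set δ0 : ℝ := (mu - lam) / 2 with hδ0
      clear_value m δ0
      have hδ0pos : 0 < δ0 := by simp only [hδ0]; linarith
      have hmlam : m - lam = δ0 := by simp only [hm, hδ0]; ring
      have hmum : mu - m = δ0 := by simp only [hm, hδ0]; ring
      obtain ⟨T4, hT4⟩ := hεsmall (δ0 ^ 2 / 2) (by positivity)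
      have hcross : ∀ t1 t2 : ℝ, t1 ≤ t2 → t2 ≤ T4 → m < u t1 → u t2 < m → False := by
        intro t1 t2 h12 h2 hgt hlt
        obtain ⟨t, htI, hteq, htd⟩ := BZaux.exists_downcrossing hu_diff h12 hgt hlt
        rw [hukey t, hfact (u t), hteq] at htd
        have hε' : |ε t| < δ0 ^ 2 / 2 := hT4 t (le_trans htI.2 h2)
        have h3 := (abs_lt.mp hε').1
        nlinarith [hmlam, hmum]
      by_cases hAbove : ∀ t ≤ T4, m ≤ u t
      · -- u stays above m: limit is mu
        have Hc : ∀ δ : ℝ, 0 < δ → ∃ T : ℝ, ∀ t ≤ T, mu - δ < u t := by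
          intro δ hδ
          set δ'' : ℝ := min δ δ0 with hδ''
          clear_value δ''
          have hδ''pos : 0 < δ'' := by rw [hδ'']; exact lt_min hδ hδ0pos
          have hδ''δ : δ'' ≤ δ := by rw [hδ'']; exact min_le_left _ _
          have hδ''δ0 : δ'' ≤ δ0 := by rw [hδ'']; exact min_le_right _ _
          set κ : ℝ := δ0 * (δ'' / 2) with hκ
          clear_value κ
          have hκpos : 0 < κ := by rw [hκ]; positivity
          obtain ⟨Tη, hTη⟩ := hεsmall (κ / 2) (by positivity)
          refine ⟨min T4 Tη, fun t ht => ?_⟩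
          by_contra hle
          push_neg at hle
          have hdpos : ∀ s ≤ t, u s ≤ mu - δ'' / 2 → κ / 2 ≤ deriv u s := by
            intro s hs hA
            rw [hukey s, hfact (u s)]
            have hε' : |ε s| < κ / 2 :=
              hTη s (le_trans (le_trans hs ht) (min_le_right _ _))
            have hms : m ≤ u s :=
              hAbove s (le_trans (le_trans hs ht) (min_le_left _ _))
            have h1 : δ0 ≤ u s - lam := by linarith [hmlam]
            have h2 : δ'' / 2 ≤ mu - u s := by linarith
            have h3 := (abs_lt.mp hε').1
            nlinarith [mul_le_mul h1 h2 (by linarith) (by linarith)]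
          have hpers : ∀ s ≤ t, u s ≤ mu - δ'' / 2 := by
            apply BZaux.backward_persist' hu_diff
              (show u t < mu - δ'' / 2 by linarith)
            intro s hs hA
            exact lt_of_lt_of_le (by linarith : (0:ℝ) < κ / 2) (hdpos s hs hA)
          set t1 : ℝ := t - (2 * mu / κ + 1) with ht1
          clear_value t1
          have hmupos : 0 < mu := by linarith
          have ht1le : t1 ≤ t := by
            simp only [ht1]
            have : 0 < 2 * mu / κ := by positivity
            linarith
          have hmean := BZaux.diff_ge hu_diff ht1le (m := κ / 2)
            (fun s hsI => hdpos s hsI.2 (hpers s hsI.2))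
          have hid : κ / 2 * (2 * mu / κ) = mu := BZaux.halfmul (ne_of_gt hκpos)
          have hdist : t - t1 = 2 * mu / κ + 1 := by simp only [ht1]; ring
          nlinarith [hu_pos t1, hκpos]
        refine ⟨mu, htend mu ?_, Or.inr rfl⟩
        intro δ hδ
        obtain ⟨Ta, hTa⟩ := Ha δ hδ
        obtain ⟨Tc, hTc⟩ := Hc δ hδ
        exact ⟨min Ta Tc, fun t ht =>
          ⟨hTc t (le_trans ht (min_le_right _ _)),
           hTa t (le_trans ht (min_le_left _ _))⟩⟩
      · -- u drops below m somewhere: limit is lam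
        push_neg at hAbove
        obtain ⟨t2, ht2T4, ht2m⟩ := hAbove
        have hBelow : ∀ t ≤ t2, u t ≤ m := by
          intro t ht
          by_contra hgt
          push_neg at hgt
          exact hcross t t2 ht ht2T4 hgt ht2m
        have Hd : ∀ δ : ℝ, 0 < δ → ∃ T : ℝ, ∀ t ≤ T, u t < lam + δ := by
          intro δ hδ
          set δ'' : ℝ := min δ δ0 with hδ''
          clear_value δ''
          have hδ''pos : 0 < δ'' := by rw [hδ'']; exact lt_min hδ hδ0pos
          have hδ''δ : δ'' ≤ δ := by rw [hδ'']; exact min_le_left _ _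
          have hδ''δ0 : δ'' ≤ δ0 := by rw [hδ'']; exact min_le_right _ _
          set κ : ℝ := (δ'' / 2) * δ0 with hκ
          clear_value κ
          have hκpos : 0 < κ := by rw [hκ]; positivity
          obtain ⟨Tη, hTη⟩ := hεsmall (κ / 2) (by positivity)
          set T6 : ℝ := min t2 Tη with hT6
          clear_value T6
          refine ⟨T6 - (2 * (m - lam) / κ + 1), fun t ht => ?_⟩
          by_contra hge
          push_neg at hge
          have htT6 : t ≤ T6 := by
            have : 0 < 2 * (m - lam) / κ := by
              apply div_pos _ hκpos
              linarith [hmlam]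
            linarith
          have hdpos : ∀ s ∈ Set.Icc t T6, lam + δ'' / 2 ≤ u s → κ / 2 ≤ deriv u s := by
            intro s hsI hA
            rw [hukey s, hfact (u s)]
            have hε' : |ε s| < κ / 2 := hTη s (le_trans hsI.2 (hT6 ▸ min_le_right _ _))
            have hms : u s ≤ m := hBelow s (le_trans hsI.2 (hT6 ▸ min_le_left _ _))
            have h1 : δ'' / 2 ≤ u s - lam := by linarith
            have h2 : δ0 ≤ mu - u s := by linarith [hmum]
            have h3 := (abs_lt.mp hε').1
            nlinarith [mul_le_mul h1 h2 (by linarith) (by linarith)]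
          have hfp : ∀ s ∈ Set.Icc t T6, lam + δ'' / 2 < u s := by
            apply BZaux.forward_persist' hu_diff
              (show lam + δ'' / 2 < u t by linarith)
            intro s hsI hA
            exact lt_of_lt_of_le (by linarith : (0:ℝ) < κ / 2) (hdpos s hsI hA)
          have hmean := BZaux.diff_ge hu_diff htT6 (m := κ / 2)
            (fun s hsI => hdpos s hsI (hfp s hsI).le)
          have hid : κ / 2 * (2 * (m - lam) / κ) = m - lam :=
            BZaux.halfmul (ne_of_gt hκpos)
          have hdist : 2 * (m - lam) / κ + 1 ≤ T6 - t := by linarith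
          have hT6m : u T6 ≤ m := hBelow T6 (hT6 ▸ min_le_left _ _)
          nlinarith [hκpos]
        refine ⟨lam, htend lam ?_, Or.inl rfl⟩
        intro δ hδ
        obtain ⟨Tb, hTb⟩ := Hb δ hδ
        obtain ⟨Td, hTd⟩ := Hd δ hδ
        exact ⟨min Tb Td, fun t ht =>
          ⟨hTb t (le_trans ht (min_le_left _ _)),
           hTd t (le_trans ht (min_le_right _ _))⟩⟩
  · -- negative discriminant: contradiction
    exfalso
    push_neg at hDpos
    obtain ⟨T1, hT1⟩ := hεsmall (-D / 8) (by linarith)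
    set T : ℝ := min T0 T1 with hT
    clear_value T
    have hderneg : ∀ t ≤ T, deriv u t ≤ D / 8 := by
      intro t ht
      rw [hukey t]
      have hε' : |ε t| < -D / 8 := hT1 t (le_trans ht (hT ▸ min_le_right _ _))
      have h3 := (abs_lt.mp hε').2
      have hsq := sq_nonneg (u t - c / 2)
      simp only [hD] at *
      nlinarith
    set t2 : ℝ := T - (8 * M / (-D) + 1) with ht2
    clear_value t2
    have hMpos' : 0 < M := by linarith
    have ht2le : t2 ≤ T := by
      simp only [ht2]
      have : 0 < 8 * M / (-D) := by
        apply div_pos (by linarith) (by linarith)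
      linarith
    have hmean := BZaux.diff_le hu_diff ht2le (m := D / 8)
      (fun s hsI => hderneg s hsI.2)
    have hM2 := H1 t2 (le_trans ht2le (hT ▸ min_le_left _ _))
    have hDne : D ≠ 0 := by linarith
    have hid : D / 8 * (8 * M / (-D)) = -M := by
      field_simp
    have hdist : T - t2 = 8 * M / (-D) + 1 := by simp only [ht2]; ring
    nlinarith [hu_pos T]
end

section
/- Let r > 0, b > 0, h ≥ 0 and c ∈ ℝ. Suppose φ, ψ : ℝ → ℝ are bounded twice continuously differentiable functions satisfying, for all t ∈ ℝ, φ''(t) − c·φ'(t) + φ(t)·(1 − r − φ(t) + r·ψ(t)) = 0 and ψ''(t) − c·ψ'(t) + b·φ(t − c·h)·(1 − ψ(t)) = 0, together with 0 < φ(t) < 1, 0 < ψ(t) < 1 for all t, φ(t), ψ(t) → 0 as t → −∞ and φ(t), ψ(t) → 1 as t → +∞. Then φ'(t) → 0 and ψ'(t) → 0 as t → ±∞, and the speed is necessarily positive: c > 0. -/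
open Real Filter Asymptotics

section BZAux
open Set

lemma cd2_deriv_diff {f : ℝ → ℝ} (hf : ContDiff ℝ 2 f) : Differentiable ℝ (deriv f) := by
  rw [show (2 : WithTop ℕ∞) = 1 + 1 from rfl, contDiff_succ_iff_deriv] at hf
  exact hf.2.2.differentiable (by norm_num)

lemma mvt_bound {g : ℝ → ℝ} {C : ℝ} (hg : Differentiable ℝ g)
    (hC : ∀ x, |deriv g x| ≤ C) (x y : ℝ) : |g y - g x| ≤ C * |y - x| := by
  have := convex_univ.norm_image_sub_le_of_norm_hasDerivWithin_le
    (f' := deriv g) (fun z _ => (hg z).hasDerivAt.hasDerivWithinAt)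
    (fun z _ => hC z) (mem_univ x) (mem_univ y)
  simpa [Real.norm_eq_abs] using this

lemma mvt_bound_Icc {g g' : ℝ → ℝ} (hg : ∀ x, HasDerivAt g (g' x) x) {a b C : ℝ}
    (hC : ∀ x ∈ Icc a b, |g' x| ≤ C) {x y : ℝ} (hx : x ∈ Icc a b) (hy : y ∈ Icc a b) :
    |g y - g x| ≤ C * |y - x| := by
  have := (convex_Icc a b).norm_image_sub_le_of_norm_hasDerivWithin_le
    (f' := g') (fun z hz => (hg z).hasDerivWithinAt)
    (fun z hz => hC z hz) hx hy
  simpa [Real.norm_eq_abs] using this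

lemma deriv_bound {f F : ℝ → ℝ} {c M : ℝ}
    (hf : Differentiable ℝ f) (hf' : Differentiable ℝ (deriv f))
    (hode : ∀ t, deriv (deriv f) t = c * deriv f t - F t)
    (hF : ∀ t, |F t| ≤ M)
    (hosc : ∀ s t : ℝ, |f s - f t| ≤ 1) :
    ∀ t, |deriv f t| ≤ exp |c| * (1 + M) := by
  intro t
  -- mean value: a point ξ in (t, t+1) where the derivative is ≤ 1
  obtain ⟨ξ, hξmem, hξ⟩ := exists_hasDerivAt_eq_slope f (deriv f) (by linarith : t < t + 1)
    (hf.continuous.continuousOn) (fun x _ => (hf x).hasDerivAt)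
  have hξ1 : |deriv f ξ| ≤ 1 := by
    rw [hξ]; simpa using hosc (t+1) t
  -- integrating factor
  set g : ℝ → ℝ := fun s => exp (-(c*s)) * deriv f s with hgdef
  have hg : ∀ s, HasDerivAt g (exp (-(c*s)) * (-F s)) s := by
    intro s
    have h1 : HasDerivAt (fun s : ℝ => exp (-(c*s))) (exp (-(c*s)) * (-(c*1))) s :=
      (((hasDerivAt_id s).const_mul c).neg).exp
    have h2 := h1.mul (hf' s).hasDerivAt
    exact h2.congr_deriv (by rw [hode s]; ring)
  -- bound for the factor on [t, t+1]
  have hexp : ∀ s ∈ Icc t (t+1), exp (-(c*s)) ≤ exp (-(c*t)) * exp |c| := by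
    intro s hs
    rw [← Real.exp_add, Real.exp_le_exp]
    have h1 : -(c*(s-t)) ≤ |c| := by
      calc -(c*(s-t)) ≤ |c*(s-t)| := neg_le_abs _
        _ = |c| * |s-t| := abs_mul _ _
        _ ≤ |c| * 1 := by
            apply mul_le_mul_of_nonneg_left _ (abs_nonneg c)
            rw [abs_le]; constructor <;> [linarith [hs.1]; linarith [hs.2]]
        _ = |c| := mul_one _
    nlinarith [h1]
  have hM0 : 0 ≤ M := le_trans (abs_nonneg _) (hF 0)
  have hbound : ∀ s ∈ Icc t (t+1), |exp (-(c*s)) * (-F s)| ≤ exp (-(c*t)) * exp |c| * M := by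
    intro s hs
    rw [abs_mul, abs_neg, abs_of_pos (exp_pos _)]
    have := hexp s hs
    have := hF s
    nlinarith [exp_pos (-(c*s)), abs_nonneg (F s)]
  have hξIcc : ξ ∈ Icc t (t+1) := ⟨le_of_lt hξmem.1, le_of_lt hξmem.2⟩
  have htIcc : t ∈ Icc t (t+1) := ⟨le_refl _, by linarith⟩
  have hgt : |g t - g ξ| ≤ exp (-(c*t)) * exp |c| * M * |t - ξ| :=
    mvt_bound_Icc hg hbound hξIcc htIcc
  have htξ : |t - ξ| ≤ 1 := by
    rw [abs_le]; constructor <;> [linarith [hξmem.2]; linarith [hξmem.1]]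
  have hgξ : |g ξ| ≤ exp (-(c*t)) * exp |c| := by
    rw [hgdef]
    simp only []
    rw [abs_mul, abs_of_pos (exp_pos _)]
    have h1 := hexp ξ hξIcc
    nlinarith [exp_pos (-(c*ξ))]
  have hgtb : |g t| ≤ exp (-(c*t)) * exp |c| * (1 + M) := by
    have h1 : |g t| ≤ |g ξ| + |g t - g ξ| := by
      have := abs_sub_abs_le_abs_sub (g t) (g ξ); linarith [abs_sub_comm (g t) (g ξ)]
    have h2 : exp (-(c*t)) * exp |c| * M * |t - ξ| ≤ exp (-(c*t)) * exp |c| * M * 1 := by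
      apply mul_le_mul_of_nonneg_left htξ
      positivity
    rw [mul_one] at h2
    nlinarith
  -- conclude
  have hft : deriv f t = exp (c*t) * g t := by
    rw [hgdef]; simp only []
    rw [← mul_assoc, ← Real.exp_add]
    simp
  rw [hft, abs_mul, abs_of_pos (exp_pos _)]
  have key : exp (c*t) * (exp (-(c*t)) * exp |c| * (1 + M)) = exp |c| * (1+M) := by
    rw [show exp (c*t) * (exp (-(c*t)) * exp |c| * (1 + M)) =
      (exp (c*t) * exp (-(c*t))) * (exp |c| * (1+M)) by ring, ← Real.exp_add]
    simp
  nlinarith [exp_pos (c*t), abs_nonneg (g t)]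

lemma tendsto_deriv_atTop_aux {f : ℝ → ℝ} {L K : ℝ}
    (hf : Differentiable ℝ f) (hf' : Differentiable ℝ (deriv f))
    (hK : ∀ t, |deriv (deriv f) t| ≤ K)
    (hlim : Tendsto f atTop (nhds L)) :
    Tendsto (deriv f) atTop (nhds 0) := by
  have hK0 : 0 ≤ K := le_trans (abs_nonneg _) (hK 0)
  rw [Metric.tendsto_atTop]
  intro ε hε
  set δ : ℝ := min (ε / (2*(K+1))) 1 with hδdef
  have hδ : 0 < δ := lt_min (by positivity) one_pos
  have hδ1 : δ ≤ 1 := min_le_right _ _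
  have hKδ : K * δ ≤ ε / 2 := by
    have h1 : δ ≤ ε / (2*(K+1)) := min_le_left _ _
    have h2 : K * δ ≤ (K+1) * (ε / (2*(K+1))) := by
      apply mul_le_mul (by linarith) h1 (le_of_lt hδ) (by linarith)
    have h3 : (K+1) * (ε / (2*(K+1))) = ε / 2 := by
      field_simp
    linarith
  obtain ⟨N, hN⟩ := (Metric.tendsto_atTop.mp hlim) (ε*δ/8) (by positivity)
  refine ⟨N, fun t ht => ?_⟩
  obtain ⟨ξ, hξmem, hξ⟩ := exists_hasDerivAt_eq_slope f (deriv f) (by linarith : t < t + δ)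
    (hf.continuous.continuousOn) (fun x _ => (hf x).hasDerivAt)
  have hd1 : dist (f (t+δ)) L < ε*δ/8 := hN (t+δ) (by linarith)
  have hd2 : dist (f t) L < ε*δ/8 := hN t ht
  rw [Real.dist_eq] at hd1 hd2
  have hslope : |deriv f ξ| < ε / 4 := by
    rw [hξ]
    have h1 : |f (t+δ) - f t| < ε*δ/4 := by
      have := abs_sub (f (t+δ) - L) (f t - L)
      calc |f (t+δ) - f t| = |(f (t+δ) - L) - (f t - L)| := by ring_nf
        _ ≤ |f (t+δ) - L| + |f t - L| := abs_sub _ _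
        _ < ε*δ/4 := by linarith
    rw [show t + δ - t = δ by ring, abs_div, abs_of_pos hδ, div_lt_iff₀ hδ]
    calc |f (t + δ) - f t| < ε*δ/4 := h1
      _ ≤ ε / 4 * δ := by ring_nf; rfl
  have hlip : |deriv f t - deriv f ξ| ≤ K * δ := by
    have := mvt_bound hf' hK ξ t
    have htξ : |t - ξ| ≤ δ := by
      rw [abs_le]; constructor <;> [linarith [hξmem.2]; linarith [hξmem.1]]
    calc |deriv f t - deriv f ξ| ≤ K * |t - ξ| := this
      _ ≤ K * δ := mul_le_mul_of_nonneg_left htξ hK0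
  rw [Real.dist_eq, sub_zero]
  calc |deriv f t| ≤ |deriv f t - deriv f ξ| + |deriv f ξ| := by
        have := abs_add_le (deriv f t - deriv f ξ) (deriv f ξ); simpa using this
    _ < K * δ + ε / 4 := by linarith
    _ ≤ ε / 2 + ε / 4 := by linarith
    _ < ε := by linarith

lemma tendsto_deriv_atBot_aux {f : ℝ → ℝ} {L K : ℝ}
    (hf : Differentiable ℝ f) (hf' : Differentiable ℝ (deriv f))
    (hK : ∀ t, |deriv (deriv f) t| ≤ K)
    (hlim : Tendsto f atBot (nhds L)) :
    Tendsto (deriv f) atBot (nhds 0) := by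
  set g : ℝ → ℝ := fun t => f (-t) with hgdef
  have hg : Differentiable ℝ g := hf.comp differentiable_neg
  have hdg : deriv g = fun t => -deriv f (-t) := funext fun t => deriv_comp_neg f t
  have hg' : Differentiable ℝ (deriv g) := by
    rw [hdg]; exact (hf'.comp differentiable_neg).neg
  have hKg : ∀ t, |deriv (deriv g) t| ≤ K := by
    intro t
    rw [hdg]
    have h1 : deriv (fun t : ℝ => -deriv f (-t)) t = -deriv (fun t : ℝ => deriv f (-t)) t := by
      rw [deriv.fun_neg]
    rw [h1, deriv_comp_neg]
    simpa using hK (-t)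
  have hglim : Tendsto g atTop (nhds L) := hlim.comp tendsto_neg_atTop_atBot
  have := tendsto_deriv_atTop_aux hg hg' hKg hglim
  rw [hdg] at this
  have h2 : Tendsto (fun t : ℝ => deriv f (-t)) atTop (nhds 0) := by
    have := this.neg; simpa using this
  have h3 := h2.comp tendsto_neg_atBot_atTop
  have h4 : ((fun t : ℝ => deriv f (-t)) ∘ Neg.neg) = deriv f := by
    funext t; simp [Function.comp]
  rwa [h4] at h3

end BZAux

open Set in
theorem bz_derivatives_vanish_and_speed_positive
    (r b h c : ℝ) (hr : 0 < r) (hb : 0 < b) (hh : 0 ≤ h)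
    (φ ψ : ℝ → ℝ)
    (hφ : ContDiff ℝ 2 φ) (hψ : ContDiff ℝ 2 ψ)
    (hφbd : ∃ M : ℝ, ∀ t : ℝ, |φ t| ≤ M) (hψbd : ∃ M : ℝ, ∀ t : ℝ, |ψ t| ≤ M)
    (heq1 : ∀ t : ℝ,
      deriv (deriv φ) t - c * deriv φ t + φ t * (1 - r - φ t + r * ψ t) = 0)
    (heq2 : ∀ t : ℝ,
      deriv (deriv ψ) t - c * deriv ψ t + b * φ (t - c * h) * (1 - ψ t) = 0)
    (hφ01 : ∀ t : ℝ, 0 < φ t ∧ φ t < 1) (hψ01 : ∀ t : ℝ, 0 < ψ t ∧ ψ t < 1)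
    (hφbot : Tendsto φ atBot (nhds 0)) (hψbot : Tendsto ψ atBot (nhds 0))
    (hφtop : Tendsto φ atTop (nhds 1)) (hψtop : Tendsto ψ atTop (nhds 1)) :
    Tendsto (deriv φ) atBot (nhds 0) ∧ Tendsto (deriv φ) atTop (nhds 0) ∧
    Tendsto (deriv ψ) atBot (nhds 0) ∧ Tendsto (deriv ψ) atTop (nhds 0) ∧
    0 < c := by
  have hφd : Differentiable ℝ φ := hφ.differentiable (by norm_num)
  have hψd : Differentiable ℝ ψ := hψ.differentiable (by norm_num)
  have hφd' : Differentiable ℝ (deriv φ) := cd2_deriv_diff hφ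
  have hψd' : Differentiable ℝ (deriv ψ) := cd2_deriv_diff hψ
  -- forcing terms
  set Fφ : ℝ → ℝ := fun t => φ t * (1 - r - φ t + r * ψ t) with hFφdef
  set Fψ : ℝ → ℝ := fun t => b * φ (t - c * h) * (1 - ψ t) with hFψdef
  have hodeφ : ∀ t, deriv (deriv φ) t = c * deriv φ t - Fφ t := fun t => by
    have := heq1 t; simp only [hFφdef]; linarith
  have hodeψ : ∀ t, deriv (deriv ψ) t = c * deriv ψ t - Fψ t := fun t => by
    have := heq2 t; simp only [hFψdef]; linarith
  have hFφb : ∀ t, |Fφ t| ≤ 1 + r := by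
    intro t
    obtain ⟨h1, h2⟩ := hφ01 t
    obtain ⟨h3, h4⟩ := hψ01 t
    have hX : |1 - r - φ t + r * ψ t| ≤ 1 + r := by
      rw [abs_le]
      constructor <;> nlinarith [mul_pos hr h3, mul_le_mul_of_nonneg_left h4.le hr.le]
    have h5 : |φ t| ≤ 1 := abs_le.mpr ⟨by linarith, h2.le⟩
    calc |Fφ t| = |φ t| * |1 - r - φ t + r * ψ t| := abs_mul _ _
      _ ≤ 1 * (1 + r) := mul_le_mul h5 hX (abs_nonneg _) (by norm_num)
      _ = 1 + r := one_mul _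
  have hFψb : ∀ t, |Fψ t| ≤ b := by
    intro t
    obtain ⟨h1, h2⟩ := hφ01 (t - c * h)
    obtain ⟨h3, h4⟩ := hψ01 t
    have hprod : 0 ≤ φ (t - c * h) * (1 - ψ t) :=
      mul_nonneg h1.le (by linarith)
    have hprod2 : φ (t - c * h) * (1 - ψ t) ≤ 1 :=
      mul_le_one₀ h2.le (by linarith) (by linarith)
    rw [abs_le]
    constructor <;> simp only [hFψdef] <;>
      [nlinarith [mul_le_mul_of_nonneg_left hprod hb.le];
       nlinarith [mul_le_mul_of_nonneg_left hprod2 hb.le]]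
  have hoscφ : ∀ s t : ℝ, |φ s - φ t| ≤ 1 := by
    intro s t
    obtain ⟨h1, h2⟩ := hφ01 s; obtain ⟨h3, h4⟩ := hφ01 t
    rw [abs_le]; constructor <;> linarith
  have hoscψ : ∀ s t : ℝ, |ψ s - ψ t| ≤ 1 := by
    intro s t
    obtain ⟨h1, h2⟩ := hψ01 s; obtain ⟨h3, h4⟩ := hψ01 t
    rw [abs_le]; constructor <;> linarith
  -- derivative bounds
  have hBφ := deriv_bound hφd hφd' hodeφ hFφb hoscφ
  have hBψ := deriv_bound hψd hψd' hodeψ hFψb hoscψ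
  -- second derivative bounds
  have hKφ : ∀ t, |deriv (deriv φ) t| ≤ |c| * (exp |c| * (1 + (1+r))) + (1+r) := by
    intro t
    rw [hodeφ t]
    calc |c * deriv φ t - Fφ t| ≤ |c * deriv φ t| + |Fφ t| := abs_sub _ _
      _ ≤ |c| * (exp |c| * (1 + (1+r))) + (1+r) := by
          rw [abs_mul]
          have := hBφ t; have := hFφb t
          have := mul_le_mul_of_nonneg_left (hBφ t) (abs_nonneg c)
          linarith
  have hKψ : ∀ t, |deriv (deriv ψ) t| ≤ |c| * (exp |c| * (1 + b)) + b := by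
    intro t
    rw [hodeψ t]
    calc |c * deriv ψ t - Fψ t| ≤ |c * deriv ψ t| + |Fψ t| := abs_sub _ _
      _ ≤ |c| * (exp |c| * (1 + b)) + b := by
          rw [abs_mul]
          have := hFψb t
          have := mul_le_mul_of_nonneg_left (hBψ t) (abs_nonneg c)
          linarith
  -- the four limits
  have t1 : Tendsto (deriv φ) atBot (nhds 0) := tendsto_deriv_atBot_aux hφd hφd' hKφ hφbot
  have t2 : Tendsto (deriv φ) atTop (nhds 0) := tendsto_deriv_atTop_aux hφd hφd' hKφ hφtop
  have t3 : Tendsto (deriv ψ) atBot (nhds 0) := tendsto_deriv_atBot_aux hψd hψd' hKψ hψbot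
  have t4 : Tendsto (deriv ψ) atTop (nhds 0) := tendsto_deriv_atTop_aux hψd hψd' hKψ hψtop
  refine ⟨t1, t2, t3, t4, ?_⟩
  -- the speed is positive: W = ψ' - cψ is strictly decreasing from 0 to -c
  set W : ℝ → ℝ := fun t => deriv ψ t - c * ψ t with hWdef
  have hW' : ∀ t, HasDerivAt W (deriv (deriv ψ) t - c * deriv ψ t) t := fun t =>
    ((hψd' t).hasDerivAt).sub (((hψd t).hasDerivAt).const_mul c)
  have hWanti : StrictAnti W := by
    apply strictAnti_of_deriv_neg
    intro t
    rw [(hW' t).deriv]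
    have := heq2 t
    obtain ⟨h1, _⟩ := hφ01 (t - c * h)
    obtain ⟨_, h4⟩ := hψ01 t
    have hpos : 0 < b * φ (t - c * h) * (1 - ψ t) :=
      mul_pos (mul_pos hb h1) (by linarith)
    linarith
  have hWbot : Tendsto W atBot (nhds 0) := by
    have := t3.sub (hψbot.const_mul c)
    simpa using this
  have hWtop : Tendsto W atTop (nhds (-c)) := by
    have := t4.sub (hψtop.const_mul c)
    simpa using this
  have hW0 : W 0 ≤ 0 := by
    apply ge_of_tendsto hWbot
    filter_upwards [eventually_le_atBot (-1 : ℝ)] with u hu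
    exact le_of_lt (hWanti (by linarith : u < 0))
  have hW1 : -c ≤ W 1 := by
    apply le_of_tendsto hWtop
    filter_upwards [eventually_ge_atTop (2 : ℝ)] with u hu
    exact le_of_lt (hWanti (by linarith : (1:ℝ) < u))
  have := hWanti (zero_lt_one)
  linarith
end

section
/- Let r > 0, b > 0, h ≥ 0 and c ∈ ℝ. Suppose φ, ψ : ℝ → ℝ are bounded twice continuously differentiable functions satisfying, for all t ∈ ℝ, φ''(t) − c·φ'(t) + φ(t)·(1 − r − φ(t) + r·ψ(t)) = 0 and ψ''(t) − c·ψ'(t) + b·φ(t − c·h)·(1 − ψ(t)) = 0, with φ(t) > 0 for all t ∈ ℝ, and with the limits φ(t), ψ(t) → 0 as t → −∞ and φ(t), ψ(t) → 1 as t → +∞. Then the profile is strictly monotone and confined between its limit values: φ'(t) > 0, ψ'(t) > 0 and 0 < φ(t) < 1, 0 < ψ(t) < 1 for all t ∈ ℝ. -/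
open Real Filter Asymptotics
open Set Topology

lemma bz_reg {f : ℝ → ℝ} (hf : ContDiff ℝ 2 f) :
    Differentiable ℝ f ∧ Differentiable ℝ (deriv f) ∧ Continuous (deriv f) := by
  have e : (2 : WithTop ℕ∞) = 1 + 1 := by norm_num
  rw [e, contDiff_succ_iff_deriv] at hf
  have h1 := (contDiff_one_iff_deriv.mp hf.2.2).1
  exact ⟨hf.1, h1, h1.continuous⟩

lemma bz_max2 {f : ℝ → ℝ} (hd : Differentiable ℝ f) (hd' : Differentiable ℝ (deriv f))
    {x : ℝ} (h : IsLocalMax f x) : deriv (deriv f) x ≤ 0 := by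
  by_contra hc
  push_neg at hc
  have h0 : deriv f x = 0 := h.deriv_eq_zero
  have hs : Tendsto (slope (deriv f) x) (𝓝[≠] x) (𝓝 (deriv (deriv f) x)) :=
    hasDerivAt_iff_tendsto_slope.mp (hd' x).hasDerivAt
  have hev : ∀ᶠ t in 𝓝[≠] x, 0 < slope (deriv f) x t := hs.eventually (eventually_gt_nhds hc)
  have hev2 : ∀ᶠ t in 𝓝[>] x, 0 < deriv f t := by
    have hmono : 𝓝[>] x ≤ 𝓝[≠] x := nhdsWithin_mono x (fun t ht => ne_of_gt ht)
    filter_upwards [hev.filter_mono hmono, self_mem_nhdsWithin] with t ht ht2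
    have hx : (0:ℝ) < t - x := sub_pos.mpr ht2
    have : slope (deriv f) x t = (deriv f t - deriv f x) / (t - x) := by
      simp [slope, div_eq_inv_mul]
    rw [this, h0, sub_zero] at ht
    have := mul_pos ht hx
    rwa [div_mul_cancel₀ _ (ne_of_gt hx)] at this
  obtain ⟨u, hu, hsub⟩ := mem_nhdsGT_iff_exists_Ioo_subset.mp hev2
  obtain ⟨ε, hε, hloc⟩ := Metric.eventually_nhds_iff.mp h
  set u' : ℝ := min u (x + ε) with hu'
  have hxu' : x < u' := lt_min hu (by linarith)
  set w : ℝ := (x + u')/2 with hw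
  have hxw : x < w := by rw [hw]; linarith
  have hwu' : w < u' := by rw [hw]; linarith
  have hmono : StrictMonoOn f (Icc x w) := by
    apply strictMonoOn_of_deriv_pos (convex_Icc x w) hd.continuous.continuousOn
    intro y hy
    rw [interior_Icc] at hy
    exact hsub ⟨hy.1, lt_of_lt_of_le (lt_of_lt_of_le hy.2 (le_of_lt hwu')) (min_le_left _ _)⟩
  have h1 : f x < f w := hmono (left_mem_Icc.mpr (le_of_lt hxw)) (right_mem_Icc.mpr (le_of_lt hxw)) hxw
  have h2 : f w ≤ f x := by
    apply hloc
    have : w - x < ε := by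
      have : u' ≤ x + ε := min_le_right _ _
      rw [hw]; simp only [Real.dist_eq] at *; linarith
    rw [Real.dist_eq, abs_of_pos (sub_pos.mpr hxw)]; exact this
  linarith

lemma bz_min2 {f : ℝ → ℝ} (hd : Differentiable ℝ f) (hd' : Differentiable ℝ (deriv f))
    {x : ℝ} (h : IsLocalMin f x) : 0 ≤ deriv (deriv f) x := by
  by_contra hc
  push_neg at hc
  have h0 : deriv f x = 0 := h.deriv_eq_zero
  have hs : Tendsto (slope (deriv f) x) (𝓝[≠] x) (𝓝 (deriv (deriv f) x)) :=
    hasDerivAt_iff_tendsto_slope.mp (hd' x).hasDerivAt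
  have hev : ∀ᶠ t in 𝓝[≠] x, slope (deriv f) x t < 0 := hs.eventually (eventually_lt_nhds hc)
  have hev2 : ∀ᶠ t in 𝓝[>] x, deriv f t < 0 := by
    have hmono : 𝓝[>] x ≤ 𝓝[≠] x := nhdsWithin_mono x (fun t ht => ne_of_gt ht)
    filter_upwards [hev.filter_mono hmono, self_mem_nhdsWithin] with t ht ht2
    have hx : (0:ℝ) < t - x := sub_pos.mpr ht2
    have heq : slope (deriv f) x t = (deriv f t - deriv f x) / (t - x) := by
      simp [slope, div_eq_inv_mul]
    rw [heq, h0, sub_zero] at ht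
    have := mul_neg_of_neg_of_pos ht hx
    rwa [div_mul_cancel₀ _ (ne_of_gt hx)] at this
  obtain ⟨u, hu, hsub⟩ := mem_nhdsGT_iff_exists_Ioo_subset.mp hev2
  obtain ⟨ε, hε, hloc⟩ := Metric.eventually_nhds_iff.mp h
  set u' : ℝ := min u (x + ε) with hu'
  have hxu' : x < u' := lt_min hu (by linarith)
  set w : ℝ := (x + u')/2 with hw
  have hxw : x < w := by rw [hw]; linarith
  have hwu' : w < u' := by rw [hw]; linarith
  have hmono : StrictAntiOn f (Icc x w) := by
    apply strictAntiOn_of_deriv_neg (convex_Icc x w) hd.continuous.continuousOn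
    intro y hy
    rw [interior_Icc] at hy
    exact hsub ⟨hy.1, lt_of_lt_of_le (lt_of_lt_of_le hy.2 (le_of_lt hwu')) (min_le_left _ _)⟩
  have h1 : f w < f x := hmono (left_mem_Icc.mpr (le_of_lt hxw)) (right_mem_Icc.mpr (le_of_lt hxw)) hxw
  have h2 : f x ≤ f w := by
    apply hloc
    have : w - x < ε := by
      have : u' ≤ x + ε := min_le_right _ _
      rw [hw]; simp only [Real.dist_eq] at *; linarith
    rw [Real.dist_eq, abs_of_pos (sub_pos.mpr hxw)]; exact this
  linarith

lemma bz_exmax {f : ℝ → ℝ} (hf : Continuous f) {a b t : ℝ} (hat : a ≤ t) (htb : t ≤ b)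
    (ha : f a < f t) (hb : f b < f t) :
    ∃ s, a < s ∧ s < b ∧ IsLocalMax f s ∧ f t ≤ f s := by
  obtain ⟨s, hsmem, hsmax⟩ :=
    isCompact_Icc.exists_isMaxOn ⟨t, hat, htb⟩ hf.continuousOn
  have hts : f t ≤ f s := hsmax ⟨hat, htb⟩
  have hsa : s ≠ a := by rintro rfl; linarith
  have hsb : s ≠ b := by rintro rfl; linarith
  have h1 : a < s := lt_of_le_of_ne hsmem.1 (Ne.symm hsa)
  have h2 : s < b := lt_of_le_of_ne hsmem.2 hsb
  exact ⟨s, h1, h2, hsmax.isLocalMax (mem_of_superset (Ioo_mem_nhds h1 h2) Ioo_subset_Icc_self),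
    hts⟩

lemma bz_exmin {f : ℝ → ℝ} (hf : Continuous f) {a b t : ℝ} (hat : a ≤ t) (htb : t ≤ b)
    (ha : f t < f a) (hb : f t < f b) :
    ∃ s, a < s ∧ s < b ∧ IsLocalMin f s ∧ f s ≤ f t := by
  obtain ⟨s, hsmem, hsmin⟩ :=
    isCompact_Icc.exists_isMinOn ⟨t, hat, htb⟩ hf.continuousOn
  have hts : f s ≤ f t := hsmin ⟨hat, htb⟩
  have hsa : s ≠ a := by rintro rfl; linarith
  have hsb : s ≠ b := by rintro rfl; linarith
  have h1 : a < s := lt_of_le_of_ne hsmem.1 (Ne.symm hsa)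
  have h2 : s < b := lt_of_le_of_ne hsmem.2 hsb
  exact ⟨s, h1, h2, hsmin.isLocalMin (mem_of_superset (Ioo_mem_nhds h1 h2) Ioo_subset_Icc_self),
    hts⟩

lemma bz_expderiv {c : ℝ} {f : ℝ → ℝ} (hd' : Differentiable ℝ (deriv f)) (t : ℝ) :
    HasDerivAt (fun s => Real.exp (-(c*s)) * deriv f s)
      (Real.exp (-(c*t)) * (deriv (deriv f) t - c * deriv f t)) t := by
  have h1 : HasDerivAt (fun s : ℝ => -(c*s)) (-c) t := by
    exact (((hasDerivAt_id t).const_mul c).neg).congr_deriv (by simp)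
  have h2 := h1.exp
  have h4 := h2.mul (hd' t).hasDerivAt
  refine h4.congr_deriv ?_
  ring

lemma bz_slope_right {f : ℝ → ℝ} (hd : Differentiable ℝ f) {x : ℝ} (h : deriv f x < 0) :
    ∃ t, x < t ∧ f t < f x := by
  have hs : Tendsto (slope f x) (𝓝[≠] x) (𝓝 (deriv f x)) :=
    hasDerivAt_iff_tendsto_slope.mp (hd x).hasDerivAt
  have hev : ∀ᶠ t in 𝓝[≠] x, slope f x t < 0 := hs.eventually (eventually_lt_nhds h)
  have hmono : 𝓝[>] x ≤ 𝓝[≠] x := nhdsWithin_mono x (fun t ht => ne_of_gt ht)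
  obtain ⟨t, ht, ht2⟩ := ((hev.filter_mono hmono).and self_mem_nhdsWithin).exists
  refine ⟨t, ht2, ?_⟩
  have hx : (0:ℝ) < t - x := sub_pos.mpr ht2
  have heq : slope f x t = (f t - f x) / (t - x) := by simp [slope, div_eq_inv_mul]
  rw [heq] at ht
  have := mul_neg_of_neg_of_pos ht hx
  rw [div_mul_cancel₀ _ (ne_of_gt hx)] at this
  linarith

lemma bz_slope_left {f : ℝ → ℝ} (hd : Differentiable ℝ f) {x : ℝ} (h : deriv f x < 0) :
    ∃ t, t < x ∧ f x < f t := by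
  have hs : Tendsto (slope f x) (𝓝[≠] x) (𝓝 (deriv f x)) :=
    hasDerivAt_iff_tendsto_slope.mp (hd x).hasDerivAt
  have hev : ∀ᶠ t in 𝓝[≠] x, slope f x t < 0 := hs.eventually (eventually_lt_nhds h)
  have hmono : 𝓝[<] x ≤ 𝓝[≠] x := nhdsWithin_mono x (fun t ht => ne_of_lt ht)
  obtain ⟨t, ht, ht2⟩ := ((hev.filter_mono hmono).and self_mem_nhdsWithin).exists
  refine ⟨t, ht2, ?_⟩
  have hx : t - x < 0 := sub_neg.mpr ht2
  have heq : slope f x t = (f t - f x) / (t - x) := by simp [slope, div_eq_inv_mul]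
  rw [heq] at ht
  have := mul_pos_of_neg_of_neg ht hx
  rw [div_mul_cancel₀ _ (ne_of_lt hx)] at this
  linarith
theorem bz_wavefronts_are_monotone
    (r b h c : ℝ) (hr : 0 < r) (hb : 0 < b) (hh : 0 ≤ h)
    (φ ψ : ℝ → ℝ)
    (hφ : ContDiff ℝ 2 φ) (hψ : ContDiff ℝ 2 ψ)
    (hφbd : ∃ M : ℝ, ∀ t : ℝ, |φ t| ≤ M) (hψbd : ∃ M : ℝ, ∀ t : ℝ, |ψ t| ≤ M)
    (heq1 : ∀ t : ℝ,
      deriv (deriv φ) t - c * deriv φ t + φ t * (1 - r - φ t + r * ψ t) = 0)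
    (heq2 : ∀ t : ℝ,
      deriv (deriv ψ) t - c * deriv ψ t + b * φ (t - c * h) * (1 - ψ t) = 0)
    (hφpos : ∀ t : ℝ, 0 < φ t)
    (hφbot : Tendsto φ atBot (nhds 0)) (hψbot : Tendsto ψ atBot (nhds 0))
    (hφtop : Tendsto φ atTop (nhds 1)) (hψtop : Tendsto ψ atTop (nhds 1)) :
    ∀ t : ℝ, 0 < deriv φ t ∧ 0 < deriv ψ t ∧
      0 < φ t ∧ φ t < 1 ∧ 0 < ψ t ∧ ψ t < 1 := by
  obtain ⟨M, hM⟩ := hφbd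
  obtain ⟨hφd, hφd', hφ'cont⟩ := bz_reg hφ
  obtain ⟨hψd, hψd', hψ'cont⟩ := bz_reg hψ
  have hφc : Continuous φ := hφd.continuous
  have hψc : Continuous ψ := hψd.continuous
  have hMub : ∀ t, φ t ≤ M := fun t => le_trans (le_abs_self _) (hM t)
  -- Step C : ψ ≤ 1
  have hψle1 : ∀ t, ψ t ≤ 1 := by
    by_contra hcon; push_neg at hcon; obtain ⟨t1, ht1⟩ := hcon
    obtain ⟨A, hA⟩ := eventually_atBot.mp (hψbot.eventually (eventually_lt_nhds one_pos))
    obtain ⟨B, hB⟩ := eventually_atTop.mp (hψtop.eventually (eventually_lt_nhds ht1))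
    obtain ⟨s, has, hsb, hmax, hts⟩ :=
      bz_exmax hψc (show min A (t1-1) ≤ t1 by
          have := min_le_right A (t1-1); linarith)
        (show t1 ≤ max B (t1+1) by have := le_max_right B (t1+1); linarith)
        (show ψ (min A (t1-1)) < ψ t1 by
          have := hA _ (min_le_left A (t1-1)); linarith)
        (hB _ (le_max_left B (t1+1)))
    have hds : deriv ψ s = 0 := hmax.deriv_eq_zero
    have hdd : deriv (deriv ψ) s ≤ 0 := bz_max2 hψd hψd' hmax
    have heq := heq2 s
    have hkey : b * φ (s - c*h) * (1 - ψ s) < 0 :=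
      mul_neg_of_pos_of_neg (mul_pos hb (hφpos _)) (by linarith)
    rw [hds] at heq; linarith
  -- the exponentially weighted derivative of ψ
  have hg : ∀ t, HasDerivAt (fun s => Real.exp (-(c*s)) * deriv ψ s)
      (Real.exp (-(c*t)) * (deriv (deriv ψ) t - c * deriv ψ t)) t := bz_expderiv hψd'
  -- Step D : deriv ψ ≥ 0
  have hψ'nn : ∀ t, 0 ≤ deriv ψ t := by
    have hganti : Antitone (fun s => Real.exp (-(c*s)) * deriv ψ s) := by
      apply antitone_of_deriv_nonpos (fun t => (hg t).differentiableAt)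
      intro t
      rw [(hg t).deriv]
      have h2 := heq2 t
      have hkey : 0 ≤ b * φ (t - c*h) * (1 - ψ t) :=
        mul_nonneg (mul_pos hb (hφpos _)).le (by linarith [hψle1 t])
      have he := Real.exp_pos (-(c*t))
      nlinarith
    by_contra hcon; push_neg at hcon; obtain ⟨t0, ht0⟩ := hcon
    have hneg : ∀ t, t0 ≤ t → deriv ψ t < 0 := by
      intro t ht
      have h1 := hganti ht
      have he := Real.exp_pos (-(c*t))
      have he0 := Real.exp_pos (-(c*t0))
      simp only at h1
      nlinarith
    have hanti : StrictAntiOn ψ (Ici t0) := by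
      apply strictAntiOn_of_deriv_neg (convex_Ici t0) hψc.continuousOn
      intro x hx; rw [interior_Ici] at hx; exact hneg x hx.le
    have hlim : 1 ≤ ψ (t0+1) := by
      apply le_of_tendsto hψtop
      filter_upwards [eventually_ge_atTop (t0+1)] with t ht
      rcases eq_or_lt_of_le ht with heq|hlt
      · rw [heq]
      · exact (hanti (mem_Ici.mpr (by linarith)) (mem_Ici.mpr (by linarith)) (by linarith)).le
    have h2 : ψ (t0+1) < ψ t0 :=
      hanti (by simp : t0 ∈ Ici t0) (mem_Ici.mpr (by linarith)) (by linarith)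
    have := hψle1 t0
    linarith
  have hψmono : Monotone ψ := monotone_of_deriv_nonneg hψd hψ'nn
  -- Step E : ψ ≥ 0
  have hψnn : ∀ t, 0 ≤ ψ t := by
    intro t
    apply le_of_tendsto hψbot
    filter_upwards [eventually_le_atBot t] with s hs
    exact hψmono hs
  -- Step F : ψ > 0
  have hψpos : ∀ t, 0 < ψ t := by
    intro t
    rcases lt_or_eq_of_le (hψnn t) with hlt|heqz
    · exact hlt
    exfalso
    have hzero : ∀ s, s ≤ t → ψ s = 0 := fun s hs =>
      le_antisymm (heqz ▸ hψmono hs) (hψnn s)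
    have hd0 : ∀ s, s < t → deriv ψ s = 0 := by
      intro s hs
      have hev : ψ =ᶠ[𝓝 s] (fun _ => (0:ℝ)) := by
        filter_upwards [Iio_mem_nhds hs] with y hy
        exact hzero y hy.le
      rw [hev.deriv_eq]; simp
    have hdd0 : deriv (deriv ψ) (t-1) = 0 := by
      have hev : deriv ψ =ᶠ[𝓝 (t-1)] (fun _ => (0:ℝ)) := by
        filter_upwards [Iio_mem_nhds (show t-1 < t by linarith)] with y hy
        exact hd0 y hy
      rw [hev.deriv_eq]; simp
    have heq := heq2 (t-1)
    rw [hdd0, hd0 (t-1) (by linarith), hzero (t-1) (by linarith)] at heq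
    nlinarith [mul_pos hb (hφpos (t-1-c*h))]
  -- Step G : ψ < 1 (energy/Gronwall argument)
  have hψlt1 : ∀ t, ψ t < 1 := by
    intro t0
    rcases lt_or_eq_of_le (hψle1 t0) with hlt|heqo
    · exact hlt
    exfalso
    have hmax0 : IsLocalMax ψ t0 :=
      IsMaxOn.isLocalMax (isMaxOn_iff.mpr (fun y _ => by rw [heqo]; exact hψle1 y)) univ_mem
    have hd0 : deriv ψ t0 = 0 := hmax0.deriv_eq_zero
    set K : ℝ := 1 + 2*|c| + b*M with hK
    have hEd : ∀ t, HasDerivAt (fun s => (1 - ψ s)^2 + (deriv ψ s)^2)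
        (2*(1 - ψ t)*(-(deriv ψ t)) + 2*(deriv ψ t)*(deriv (deriv ψ) t)) t := by
      intro t
      have h1 : HasDerivAt (fun s => (1 - ψ s)^2) (2*(1 - ψ t)*(-(deriv ψ t))) t := by
        have h0 := ((hasDerivAt_const t (1:ℝ)).sub (hψd t).hasDerivAt).pow 2
        refine h0.congr_deriv ?_
        simp only [Pi.sub_apply]
        ring
      have h2 : HasDerivAt (fun s => (deriv ψ s)^2) (2*(deriv ψ t)*(deriv (deriv ψ) t)) t := by
        have h0 := ((hψd' t).hasDerivAt).pow 2
        refine h0.congr_deriv ?_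
        ring
      exact h1.add h2
    have hGd : ∀ t, HasDerivAt (fun s => Real.exp (K*s) * ((1 - ψ s)^2 + (deriv ψ s)^2))
        (Real.exp (K*t) * (K * ((1 - ψ t)^2 + (deriv ψ t)^2) +
          (2*(1 - ψ t)*(-(deriv ψ t)) + 2*(deriv ψ t)*(deriv (deriv ψ) t)))) t := by
      intro t
      have h1 : HasDerivAt (fun s : ℝ => Real.exp (K*s)) (Real.exp (K*t) * K) t := by
        simpa using ((hasDerivAt_id t).const_mul K).exp
      have h2 := h1.mul (hEd t)
      refine h2.congr_deriv ?_
      ring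
    have hGmono : Monotone (fun s => Real.exp (K*s) * ((1 - ψ s)^2 + (deriv ψ s)^2)) := by
      apply monotone_of_deriv_nonneg (fun t => (hGd t).differentiableAt)
      intro t
      rw [(hGd t).deriv]
      have he := Real.exp_pos (K*t)
      have h2 := heq2 t
      have hψ'' : deriv (deriv ψ) t = c * deriv ψ t - b * φ (t - c*h) * (1 - ψ t) := by
        linarith
      rw [hψ'']
      have ha : 0 ≤ 1 - ψ t := by linarith [hψle1 t]
      have hp : 0 ≤ deriv ψ t := hψ'nn t
      have hf1 : 0 < φ (t - c*h) := hφpos _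
      have hf2 : φ (t - c*h) ≤ M := hMub _
      have hc1 : c ≤ |c| := le_abs_self c
      have hc2 : -c ≤ |c| := neg_le_abs c
      have key : 0 ≤ K * ((1 - ψ t)^2 + (deriv ψ t)^2) +
          (2*(1 - ψ t)*(-(deriv ψ t)) + 2*(deriv ψ t)*
            (c * deriv ψ t - b * φ (t - c*h) * (1 - ψ t))) := by
        rw [hK]
        have hcc : 0 ≤ |c| + c := by linarith [neg_le_abs c]
        have hM0 : 0 ≤ M := le_trans hf1.le hf2
        nlinarith [sq_nonneg ((1 - ψ t) - deriv ψ t),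
          mul_nonneg (abs_nonneg c) (sq_nonneg (1 - ψ t)),
          mul_nonneg hcc (sq_nonneg (deriv ψ t)),
          mul_nonneg (mul_nonneg hb.le hM0) (sq_nonneg ((1 - ψ t) - deriv ψ t)),
          mul_nonneg (mul_nonneg hb.le (sub_nonneg.mpr hf2)) (mul_nonneg ha hp)]
      exact mul_nonneg he.le key
    have hG0 : Real.exp (K*t0) * ((1 - ψ t0)^2 + (deriv ψ t0)^2) = 0 := by
      rw [heqo, hd0]; norm_num
    have hconst : ∀ t, t ≤ t0 → ψ t = 1 := by
      intro t ht
      have h1 := hGmono ht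
      simp only at h1
      rw [hG0] at h1
      have he := Real.exp_pos (K*t)
      have h2 : (1 - ψ t)^2 ≤ 0 := by nlinarith [sq_nonneg (deriv ψ t), sq_nonneg (1 - ψ t)]
      have h3 : (1 - ψ t)^2 = 0 := le_antisymm h2 (sq_nonneg _)
      have h4 : 1 - ψ t = 0 := by
        exact pow_eq_zero_iff two_ne_zero |>.mp h3
      linarith
    have hlim1 : Tendsto ψ atBot (𝓝 (1:ℝ)) := by
      apply Tendsto.congr' _ tendsto_const_nhds
      filter_upwards [eventually_le_atBot t0] with t ht
      exact (hconst t ht).symm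
    have := tendsto_nhds_unique hψbot hlim1
    norm_num at this
  -- Step H : deriv ψ > 0
  have hψ'pos : ∀ t, 0 < deriv ψ t := by
    intro t0
    rcases lt_or_eq_of_le (hψ'nn t0) with hlt|heqz
    · exact hlt
    exfalso
    have hganti : ∀ x, deriv (fun s => Real.exp (-(c*s)) * deriv ψ s) x < 0 := by
      intro x
      rw [(hg x).deriv]
      have h2 := heq2 x
      have hkey : 0 < b * φ (x - c*h) * (1 - ψ x) :=
        mul_pos (mul_pos hb (hφpos _)) (by linarith [hψlt1 x])
      have he := Real.exp_pos (-(c*x))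
      nlinarith
    have hsa : StrictAnti (fun s => Real.exp (-(c*s)) * deriv ψ s) :=
      strictAnti_of_deriv_neg hganti
    have h1 := hsa (show t0 < t0+1 by linarith)
    simp only at h1
    rw [← heqz] at h1
    have h2 := hψ'nn (t0+1)
    have he := Real.exp_pos (-(c*(t0+1)))
    nlinarith
  -- Step I : φ ≤ 1, then φ < 1
  have hφle1 : ∀ t, φ t ≤ 1 := by
    by_contra hcon; push_neg at hcon; obtain ⟨t1, ht1⟩ := hcon
    obtain ⟨A, hA⟩ := eventually_atBot.mp (hφbot.eventually (eventually_lt_nhds one_pos))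
    obtain ⟨B, hB⟩ := eventually_atTop.mp (hφtop.eventually (eventually_lt_nhds ht1))
    obtain ⟨s, has, hsb, hmax, hts⟩ :=
      bz_exmax hφc (show min A (t1-1) ≤ t1 by
          have := min_le_right A (t1-1); linarith)
        (show t1 ≤ max B (t1+1) by have := le_max_right B (t1+1); linarith)
        (show φ (min A (t1-1)) < φ t1 by
          have := hA _ (min_le_left A (t1-1)); linarith)
        (hB _ (le_max_left B (t1+1)))
    have hds : deriv φ s = 0 := hmax.deriv_eq_zero
    have hdd : deriv (deriv φ) s ≤ 0 := bz_max2 hφd hφd' hmax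
    have heq := heq1 s
    have hX : 1 - r - φ s + r * ψ s < 0 := by
      nlinarith [mul_nonneg hr.le (sub_nonneg.mpr (hψle1 s))]
    have hkey : φ s * (1 - r - φ s + r * ψ s) < 0 := mul_neg_of_pos_of_neg (hφpos s) hX
    rw [hds] at heq; linarith
  have hφlt1 : ∀ t, φ t < 1 := by
    intro t0
    rcases lt_or_eq_of_le (hφle1 t0) with hlt|heqo
    · exact hlt
    exfalso
    have hmax0 : IsLocalMax φ t0 :=
      IsMaxOn.isLocalMax (isMaxOn_iff.mpr (fun y _ => by rw [heqo]; exact hφle1 y)) univ_mem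
    have hds : deriv φ t0 = 0 := hmax0.deriv_eq_zero
    have hdd : deriv (deriv φ) t0 ≤ 0 := bz_max2 hφd hφd' hmax0
    have heq := heq1 t0
    rw [heqo, hds] at heq
    have := hψlt1 t0
    nlinarith [mul_pos hr (show (0:ℝ) < 1 - ψ t0 by linarith)]
  -- Step J : deriv φ ≥ 0
  have hφ'nn : ∀ t, 0 ≤ deriv φ t := by
    by_contra hcon; push_neg at hcon; obtain ⟨t0, ht0⟩ := hcon
    obtain ⟨t1, ht01, ht1v⟩ := bz_slope_right hφd ht0
    obtain ⟨t1', ht1'0, ht1'v⟩ := bz_slope_left hφd ht0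
    obtain ⟨B, hB⟩ := eventually_atTop.mp (hφtop.eventually (eventually_gt_nhds (hφlt1 t1)))
    obtain ⟨tm, htm0, htmb, hminm, hmv⟩ :=
      bz_exmin hφc ht01.le
        (show t1 ≤ max B (t1+1) by have := le_max_right B (t1+1); linarith)
        ht1v (hB _ (le_max_left B (t1+1)))
    obtain ⟨A, hA⟩ := eventually_atBot.mp (hφbot.eventually (eventually_lt_nhds (hφpos t0)))
    obtain ⟨tM, htMa, htM0, hmaxM, hMv⟩ :=
      bz_exmax hφc (show min A (t1'-1) ≤ t1' by
          have := min_le_right A (t1'-1); linarith)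
        ht1'0.le
        (show φ (min A (t1'-1)) < φ t1' by
          have := hA _ (min_le_left A (t1'-1)); linarith)
        (show φ t0 < φ t1' from ht1'v)
    have hdm : deriv φ tm = 0 := hminm.deriv_eq_zero
    have hddm : 0 ≤ deriv (deriv φ) tm := bz_min2 hφd hφd' hminm
    have hdM : deriv φ tM = 0 := hmaxM.deriv_eq_zero
    have hddM : deriv (deriv φ) tM ≤ 0 := bz_max2 hφd hφd' hmaxM
    have heqm := heq1 tm
    have heqM := heq1 tM
    rw [hdm] at heqm
    rw [hdM] at heqM
    have hXm : 1 - r - φ tm + r * ψ tm ≤ 0 := by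
      by_contra hq; push_neg at hq
      nlinarith [mul_pos (hφpos tm) hq]
    have hXM : 0 ≤ 1 - r - φ tM + r * ψ tM := by
      by_contra hq; push_neg at hq
      nlinarith [mul_neg_of_pos_of_neg (hφpos tM) hq]
    have hψlt : ψ tM < ψ tm :=
      (strictMono_of_deriv_pos hψ'pos) (lt_trans htM0 htm0)
    have hrψ : r * ψ tM < r * ψ tm := by nlinarith
    linarith
  -- Step K : deriv φ > 0
  have hφ'pos : ∀ t, 0 < deriv φ t := by
    intro t0
    rcases lt_or_eq_of_le (hφ'nn t0) with hlt|heqz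
    · exact hlt
    exfalso
    have hmin0 : IsLocalMin (deriv φ) t0 :=
      IsMinOn.isLocalMin (isMinOn_iff.mpr (fun y _ => by rw [← heqz]; exact hφ'nn y)) univ_mem
    have hdd0 : deriv (deriv φ) t0 = 0 := hmin0.deriv_eq_zero
    have heq := heq1 t0
    rw [hdd0, ← heqz] at heq
    have hq0 : 1 - r - φ t0 + r * ψ t0 = 0 := by
      rcases mul_eq_zero.mp (show φ t0 * (1 - r - φ t0 + r * ψ t0) = 0 by linarith) with hz|hz
      · exact absurd hz (ne_of_gt (hφpos t0))
      · exact hz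
    have hqd : ∀ x, HasDerivAt (fun s => 1 - r - φ s + r * ψ s)
        (-deriv φ x + r * deriv ψ x) x := by
      intro x
      have h1 := ((hasDerivAt_const x (1-r:ℝ)).sub (hφd x).hasDerivAt).add
        (((hψd x).hasDerivAt).const_mul r)
      refine h1.congr_deriv ?_
      ring
    have hq'cont : Continuous (fun x => -deriv φ x + r * deriv ψ x) :=
      (hφ'cont.neg).add (continuous_const.mul hψ'cont)
    have hq'pos : 0 < -deriv φ t0 + r * deriv ψ t0 := by
      rw [← heqz]
      have := hψ'pos t0
      nlinarith
    have hev : ∀ᶠ x in 𝓝 t0, 0 < -deriv φ x + r * deriv ψ x :=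
      (hq'cont.tendsto t0).eventually (eventually_gt_nhds hq'pos)
    obtain ⟨ε, hε, hball⟩ := Metric.eventually_nhds_iff.mp hev
    have hqmono : StrictMonoOn (fun s => 1 - r - φ s + r * ψ s) (Icc (t0-ε/2) t0) := by
      apply strictMonoOn_of_deriv_pos (convex_Icc _ _)
        (((continuous_const.sub hφc).add (continuous_const.mul hψc)).continuousOn)
      intro x hx; rw [interior_Icc] at hx
      rw [show ((fun x => 1 - r) - φ + (fun x => r) * ψ) = (fun s => 1 - r - φ s + r * ψ s) from rfl, (hqd x).deriv]
      apply hball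
      rw [Real.dist_eq]
      rcases hx with ⟨hx1, hx2⟩
      rw [abs_lt]; constructor <;> linarith
    have hqneg : ∀ x, x ∈ Ico (t0-ε/2) t0 → 1 - r - φ x + r * ψ x < 0 := by
      intro x hx
      have := hqmono ⟨hx.1, hx.2.le⟩ (right_mem_Icc.mpr (by linarith)) hx.2
      simp only at this
      linarith [hq0, this]
    have hgd := bz_expderiv (c := c) hφd'
    have hgc : Continuous (fun s : ℝ => Real.exp (-(c*s)) * deriv φ s) :=
      (Real.continuous_exp.comp ((continuous_const.mul continuous_id).neg)).mul hφ'cont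
    have hgmono : StrictMonoOn (fun s => Real.exp (-(c*s)) * deriv φ s) (Icc (t0-ε/2) t0) := by
      apply strictMonoOn_of_deriv_pos (convex_Icc _ _) hgc.continuousOn
      intro x hx; rw [interior_Icc] at hx
      rw [(hgd x).deriv]
      have heqx := heq1 x
      have hqx : 1 - r - φ x + r * ψ x < 0 := hqneg x ⟨hx.1.le, hx.2⟩
      have hkey : 0 < -(φ x * (1 - r - φ x + r * ψ x)) := by
        have := mul_neg_of_pos_of_neg (hφpos x) hqx
        linarith
      have he := Real.exp_pos (-(c*x))
      nlinarith
    have hfin := hgmono (left_mem_Icc.mpr (by linarith)) (right_mem_Icc.mpr (by linarith))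
      (show t0-ε/2 < t0 by linarith)
    simp only at hfin
    rw [← heqz] at hfin
    have h2 := hφ'nn (t0-ε/2)
    have he := Real.exp_pos (-(c*(t0-ε/2)))
    nlinarith
  exact fun t => ⟨hφ'pos t, hψ'pos t, hφpos t, hφlt1 t, hψpos t, hψlt1 t⟩
end
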